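/- arXiv:2104.04225 — 4 statements merged into one kernel-verified Lean document; each statement's English description precedes it below -/
import Mathlib

section
/- Let C be a coherent configuration whose fibers are symmetric association schemes with a basis {E_ℓ^{(i,j)}} satisfying (B1)-(B4). If for all i,j there exist polynomials v_h^{(i,j)} of degree h with √(|X_i||X_j|) E_h^{(i,j)} = v_h^{(i,j)}(√(|X_i||X_j|) E_1^{(i,j)}) entrywise, then each Krein matrix B̂_1^{(i,j)} = (q_{1,m,n}^{(i,j)})_{m,n} is tridiagonal with nonzero superdiagonal and subdiagonal entries. -/
open Matrix Finset

lemma matrix_rank_ne_zero {m n : Type} [Fintype m] [Fintype n] [DecidableEq n]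
    (A : Matrix m n ℝ) (h : A ≠ 0) : ((A.rank : ℝ)) ≠ 0 := by
  rw [Nat.cast_ne_zero]
  intro h0
  apply h
  rw [Matrix.rank, Submodule.finrank_eq_zero, LinearMap.range_eq_bot] at h0
  ext i j
  have := congrFun (congrArg DFunLike.coe h0) (Pi.single j 1)
  simpa [Matrix.mulVecLin, Matrix.mulVec_single] using congrFun this i

lemma poly_repr (v : ℕ → Polynomial ℝ) :
    ∀ d, (∀ h, h ≤ d → (v h).natDegree = h) → v 0 ≠ 0 → ∀ p : Polynomial ℝ, p.natDegree ≤ d →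
      ∃ c : ℕ → ℝ, p = ∑ n ∈ Finset.range (d + 1), c n • v n := by
  intro d
  induction d with
  | zero =>
    intro hdeg h0 p hp
    have hc0 : (v 0).coeff 0 ≠ 0 := by
      intro h
      apply h0
      rw [Polynomial.eq_C_of_natDegree_le_zero (le_of_eq (hdeg 0 le_rfl)), h, map_zero]
    refine ⟨fun _ => p.coeff 0 / (v 0).coeff 0, ?_⟩
    rw [Finset.sum_range_one, Polynomial.eq_C_of_natDegree_le_zero hp,
      Polynomial.eq_C_of_natDegree_le_zero (le_of_eq (hdeg 0 le_rfl))]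
    simp only [Polynomial.coeff_C_zero, Polynomial.smul_C, smul_eq_mul,
      div_mul_cancel₀ _ hc0]
  | succ d ih =>
    intro hdeg h0 p hp
    have hvne : v (d + 1) ≠ 0 := by
      intro h
      have := hdeg (d + 1) le_rfl
      rw [h] at this
      simp at this
    have hlc : (v (d + 1)).coeff (d + 1) ≠ 0 := by
      have := Polynomial.leadingCoeff_ne_zero.mpr hvne
      rwa [Polynomial.leadingCoeff, hdeg (d + 1) le_rfl] at this
    set a : ℝ := p.coeff (d + 1) / (v (d + 1)).coeff (d + 1) with ha
    have hq : (p - a • v (d + 1)).natDegree ≤ d := by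
      rw [Polynomial.natDegree_le_iff_coeff_eq_zero]
      intro N hN
      rw [Polynomial.coeff_sub, Polynomial.coeff_smul]
      rcases eq_or_lt_of_le (Nat.succ_le_of_lt hN) with h | h
      · rw [← h, ha, smul_eq_mul, div_mul_cancel₀ _ hlc, sub_self]
      · rw [Polynomial.coeff_eq_zero_of_natDegree_lt (lt_of_le_of_lt hp h),
          Polynomial.coeff_eq_zero_of_natDegree_lt (by rw [hdeg (d+1) le_rfl]; exact h),
          smul_zero, sub_zero]
    obtain ⟨c, hc⟩ := ih (fun h hh => hdeg h (le_trans hh (Nat.le_succ d))) h0 _ hq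
    refine ⟨fun n => if n = d + 1 then a else c n, ?_⟩
    have hsum : ∑ x ∈ Finset.range (d + 1), (fun n => if n = d + 1 then a else c n) x • v x
        = ∑ n ∈ Finset.range (d + 1), c n • v n := by
      apply Finset.sum_congr rfl
      intro n hn
      simp only []
      rw [if_neg (by simp at hn; omega)]
    have hlast : (fun n => if n = d + 1 then a else c n) (d + 1) = a := by simp
    rw [Finset.sum_range_succ, hsum, hlast, ← hc]
    ring

/-- For a coherent configuration whose fibers are symmetric association schemes with a basis
`E_ℓ^{(i,j)}` satisfying (B1)-(B4): if for all `i,j` there are polynomials `v_h^{(i,j)}` of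
degree `h` with `√(|X_i||X_j|) E_h^{(i,j)} = v_h^{(i,j)}(√(|X_i||X_j|) E_1^{(i,j)})` entrywise,
then every Krein matrix `B̂_1^{(i,j)}` is tridiagonal with nonzero super- and subdiagonal. -/
theorem stmt3 (nf : ℕ) (X : Fin nf → Type) [∀ i, Fintype (X i)] [∀ i, DecidableEq (X i)]
    (r : Fin nf → Fin nf → ℕ)
    (E : Fin nf → Fin nf → ℕ → Matrix ((i : Fin nf) × X i) ((i : Fin nf) × X i) ℝ)
    (q : Fin nf → Fin nf → ℕ → ℕ → ℕ → ℝ)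
    (hsupp : ∀ i j ℓ, ℓ ≤ r i j → ∀ v w : (i : Fin nf) × X i,
      (v.1 ≠ i ∨ w.1 ≠ j) → E i j ℓ v w = 0)
    (hB1 : ∀ i j, E i j 0 = Matrix.of fun v w =>
      if v.1 = i ∧ w.1 = j then
        (Real.sqrt ((Fintype.card (X i) : ℝ) * (Fintype.card (X j) : ℝ)))⁻¹ else 0)
    (hB2 : ∀ i j, LinearIndependent ℝ (fun ℓ : Fin (r i j + 1) => E i j (ℓ : ℕ)))
    (hB3 : ∀ i j ℓ, ℓ ≤ r i j → (E i j ℓ)ᵀ = E j i ℓ)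
    (hB4 : ∀ i j i' j' ℓ ℓ', ℓ ≤ r i j → ℓ' ≤ r i' j' →
      E i j ℓ * E i' j' ℓ' = if ℓ = ℓ' ∧ j = i' then E i j' ℓ else 0)
    (hq : ∀ i j ℓ m, ℓ ≤ r i j → m ≤ r i j →
      (E i j ℓ).hadamard (E i j m) =
        (Real.sqrt ((Fintype.card (X i) : ℝ) * (Fintype.card (X j) : ℝ)))⁻¹ •
          ∑ n ∈ Finset.range (r i j + 1), q i j ℓ m n • E i j n)
    (hm : ∀ i j h ℓ, h ≤ r i j → ℓ ≤ r i j →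
      ((E i j ℓ).rank : ℝ) * q i j 1 h ℓ = ((E i i h).rank : ℝ) * q i j 1 ℓ h)
    (hpoly : ∀ i j, ∃ v : ℕ → Polynomial ℝ, ∀ h, h ≤ r i j → (v h).natDegree = h ∧
      Real.sqrt ((Fintype.card (X i) : ℝ) * (Fintype.card (X j) : ℝ)) • E i j h =
        Matrix.of fun x y => (v h).eval
          ((Real.sqrt ((Fintype.card (X i) : ℝ) * (Fintype.card (X j) : ℝ)) •
            E i j 1) x y)) :
    ∀ i j, (∀ m n, m ≤ r i j → n ≤ r i j → (m + 2 ≤ n ∨ n + 2 ≤ m) → q i j 1 m n = 0) ∧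
      (∀ m, m + 1 ≤ r i j → q i j 1 m (m + 1) ≠ 0 ∧ q i j 1 (m + 1) m ≠ 0) := by
  intro i j
  set N : ℝ := Real.sqrt ((Fintype.card (X i) : ℝ) * (Fintype.card (X j) : ℝ)) with hNdef
  -- each E i j ℓ with ℓ ≤ r i j is nonzero
  have hne : ∀ ℓ, ℓ ≤ r i j → E i j ℓ ≠ 0 := by
    intro ℓ hℓ
    have := (hB2 i j).ne_zero (⟨ℓ, by omega⟩ : Fin (r i j + 1))
    simpa using this
  -- fibers are nonempty
  have hXi : 0 < Fintype.card (X i) := by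
    rcases Nat.eq_zero_or_pos (Fintype.card (X i)) with h | h
    · exfalso
      apply hne 0 (Nat.zero_le _)
      ext x y
      rw [Matrix.zero_apply]
      refine hsupp i j 0 (Nat.zero_le _) x y (Or.inl ?_)
      intro hxi
      rw [Fintype.card_eq_zero_iff] at h
      exact h.elim' (hxi ▸ x.2)
    · exact h
  have hXj : 0 < Fintype.card (X j) := by
    rcases Nat.eq_zero_or_pos (Fintype.card (X j)) with h | h
    · exfalso
      apply hne 0 (Nat.zero_le _)
      ext x y
      rw [Matrix.zero_apply]
      refine hsupp i j 0 (Nat.zero_le _) x y (Or.inr ?_)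
      intro hyj
      rw [Fintype.card_eq_zero_iff] at h
      exact h.elim' (hyj ▸ y.2)
    · exact h
  have hN : N ≠ 0 := by
    rw [hNdef]
    positivity
  obtain ⟨v, hv⟩ := hpoly i j
  -- entrywise polynomial identity
  have hmat : ∀ h, h ≤ r i j → ∀ x y,
      N * E i j h x y = (v h).eval (N * E i j 1 x y) := by
    intro h hh x y
    have := congrFun (congrFun (hv h hh).2 x) y
    rw [← hNdef] at this
    simpa only [Matrix.smul_apply, smul_eq_mul, Matrix.of_apply] using this
  -- each polynomial is nonzero
  have hvne : ∀ h, h ≤ r i j → v h ≠ 0 := by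
    intro h hh h0
    rcases Nat.eq_zero_or_pos h with rfl | hpos
    · apply hne 0 (Nat.zero_le _)
      ext x y
      rw [Matrix.zero_apply]
      have := hmat 0 hh x y
      rw [h0] at this
      simp only [Polynomial.eval_zero] at this
      exact (mul_eq_zero.mp this).resolve_left hN
    · have := (hv h hh).1
      rw [h0] at this
      simp at this
      omega
  -- main claim for superdiagonal part
  have main : ∀ m, m + 1 ≤ r i j →
      (∀ n, n ≤ r i j → m + 2 ≤ n → q i j 1 m n = 0) ∧ q i j 1 m (m + 1) ≠ 0 := by
    intro m hm1
    have hmr : m ≤ r i j := by omega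
    have h1r : 1 ≤ r i j := by omega
    have hdeg : (v 1 * v m).natDegree = m + 1 := by
      rw [Polynomial.natDegree_mul (hvne 1 h1r) (hvne m hmr), (hv 1 h1r).1, (hv m hmr).1]
      omega
    obtain ⟨c, hc⟩ := poly_repr v (m + 1) (fun h hh => (hv h (le_trans hh hm1)).1)
      (hvne 0 (Nat.zero_le _)) (v 1 * v m) (le_of_eq hdeg)
    set c' : ℕ → ℝ := fun n => if n < m + 2 then c n else 0 with hc'def
    -- first entrywise identity from Hadamard product
    have hmain : ∀ x y, (v 1 * v m).eval (N * E i j 1 x y)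
        = ∑ n ∈ Finset.range (r i j + 1), q i j 1 m n * (N * E i j n x y) := by
      intro x y
      rw [Polynomial.eval_mul, ← hmat 1 h1r x y, ← hmat m hmr x y]
      have hqq := congrFun (congrFun (hq i j 1 m h1r hmr) x) y
      rw [← hNdef] at hqq
      rw [Matrix.hadamard_apply, Matrix.smul_apply, Matrix.sum_apply] at hqq
      have : N * E i j 1 x y * (N * E i j m x y)
          = N * N * (E i j 1 x y * E i j m x y) := by ring
      rw [this, hqq, smul_eq_mul, Finset.mul_sum, Finset.mul_sum]
      apply Finset.sum_congr rfl
      intro n hn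
      rw [Matrix.smul_apply, smul_eq_mul]
      have hNN : N * N * (N⁻¹ * (q i j 1 m n * E i j n x y))
          = (N * N⁻¹) * (q i j 1 m n * (N * E i j n x y)) := by ring
      rw [hNN, mul_inv_cancel₀ hN, one_mul]
    -- second entrywise identity from polynomial expansion
    have hmain2 : ∀ x y, (v 1 * v m).eval (N * E i j 1 x y)
        = ∑ n ∈ Finset.range (r i j + 1), c' n * (N * E i j n x y) := by
      intro x y
      rw [hc, Polynomial.eval_finset_sum]
      rw [← Finset.sum_subset (Finset.range_subset_range.mpr (by omega : m + 1 + 1 ≤ r i j + 1))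
        (fun n _ hn => by
          simp only [hc'def]
          rw [if_neg (by simp at hn ⊢; omega), zero_mul])]
      apply Finset.sum_congr rfl
      intro n hn
      simp only [Polynomial.eval_smul, smul_eq_mul]
      rw [← hmat n (by simp at hn; omega) x y]
      simp only [hc'def]
      rw [if_pos (by simp at hn; omega)]
    -- linear combination of E's vanishes
    have hsum0 : ∑ n ∈ Finset.range (r i j + 1), (q i j 1 m n - c' n) • E i j n = 0 := by
      ext x y
      rw [Matrix.sum_apply, Matrix.zero_apply]
      have h2 : ∑ n ∈ Finset.range (r i j + 1),
          (q i j 1 m n - c' n) * (N * E i j n x y) = 0 := by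
        have := (hmain x y).symm.trans (hmain2 x y)
        rw [Finset.sum_congr rfl (fun n _ => sub_mul (q i j 1 m n) (c' n) (N * E i j n x y)),
          Finset.sum_sub_distrib, this, sub_self]
      have h3 : N * ∑ n ∈ Finset.range (r i j + 1),
          (q i j 1 m n - c' n) * E i j n x y = 0 := by
        rw [Finset.mul_sum, ← h2]
        apply Finset.sum_congr rfl
        intro n _
        ring
      have := (mul_eq_zero.mp h3).resolve_left hN
      rw [← this]
      apply Finset.sum_congr rfl
      intro n _
      rw [Matrix.smul_apply, smul_eq_mul]
    -- uniqueness via linear independence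
    have huniq : ∀ n, n ≤ r i j → q i j 1 m n = c' n := by
      intro n hn
      have hli := Fintype.linearIndependent_iff.mp (hB2 i j)
        (fun ℓ : Fin (r i j + 1) => q i j 1 m (ℓ : ℕ) - c' (ℓ : ℕ)) ?_ ⟨n, by omega⟩
      · exact sub_eq_zero.mp hli
      · rw [← Finset.sum_range (fun k => (q i j 1 m k - c' k) • E i j k)]
        exact hsum0
    constructor
    · intro n hn hmn
      rw [huniq n hn]
      simp only [hc'def]
      rw [if_neg (by omega)]
    · have hq1 : q i j 1 m (m + 1) = c (m + 1) := by
        rw [huniq (m + 1) hm1]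
        simp only [hc'def]
        rw [if_pos (by omega)]
      rw [hq1]
      intro h0
      have hle : (v 1 * v m).natDegree ≤ m := by
        rw [hc, Finset.sum_range_succ, h0, zero_smul, add_zero]
        apply Polynomial.natDegree_sum_le_of_forall_le
        intro n hn
        calc (c n • v n).natDegree ≤ (v n).natDegree := Polynomial.natDegree_smul_le _ _
          _ = n := (hv n (by simp at hn; omega)).1
          _ ≤ m := by simp at hn; omega
      omega
  -- finish
  constructor
  · intro m n hmr hnr hor
    rcases hor with h | h
    · exact (main m (by omega)).1 n hnr h
    · -- subdiagonal: use the symmetry relation hm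
      have hq0 : q i j 1 n m = 0 := (main n (by omega)).1 m hmr (by omega)
      have hrel := hm i j n m hnr hmr
      rw [hq0, mul_zero] at hrel
      have hrel2 := hm i j n (n + 1) hnr (by omega)
      have hlhs : ((E i j (n + 1)).rank : ℝ) * q i j 1 n (n + 1) ≠ 0 :=
        mul_ne_zero (matrix_rank_ne_zero _ (hne (n + 1) (by omega)))
          (main n (by omega)).2
      rw [hrel2] at hlhs
      have hrank : ((E i i n).rank : ℝ) ≠ 0 := fun h => hlhs (by rw [h, zero_mul])
      exact ((mul_eq_zero.mp hrel.symm).resolve_left hrank)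
  · intro m hm1
    refine ⟨(main m hm1).2, ?_⟩
    have hrel := hm i j m (m + 1) (by omega) hm1
    have hlhs : ((E i j (m + 1)).rank : ℝ) * q i j 1 m (m + 1) ≠ 0 :=
      mul_ne_zero (matrix_rank_ne_zero _ (hne (m + 1) hm1)) (main m hm1).2
    rw [hrel] at hlhs
    intro h0
    apply hlhs
    rw [h0, mul_zero]
end

section
/- For a coherent configuration with basis satisfying (B1)-(B4), the Krein numbers admit the explicit expression q_{ℓ,ℓ',n}^{(i,j)} = (√(|X_i||X_j|) m_ℓ^{(i,j)} m_{ℓ'}^{(i,j)} / |X_i|^2) Σ_ν (1/(k_ν^{(i,j)})^2) p_ν^{(i,j)}(ℓ) p_ν^{(i,j)}(ℓ') p_ν^{(i,j)}(n), with sum over all relations ν between X_i and X_j. -/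
open Matrix Finset

lemma trace_eq_rank_of_idem {m : Type*} [Fintype m] [DecidableEq m]
    (P : Matrix m m ℝ) (h : P * P = P) : P.trace = (P.rank : ℝ) := by
  have hf : P.mulVecLin ∘ₗ P.mulVecLin = P.mulVecLin := by
    rw [← Matrix.mulVecLin_mul, h]
  obtain ⟨p, hp⟩ := (LinearMap.isProj_iff_isIdempotentElem _).mpr hf
  have hrange : LinearMap.range P.mulVecLin = p := by
    apply le_antisymm
    · rintro x ⟨y, rfl⟩; exact hp.map_mem y
    · intro x hx; exact ⟨x, hp.map_id x hx⟩
  have htr := hp.trace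
  have h2 : LinearMap.trace ℝ _ P.mulVecLin = P.trace := by
    rw [LinearMap.trace_eq_matrix_trace ℝ (Pi.basisFun ℝ m),
      LinearMap.toMatrix_eq_toMatrix']
    congr 1
    exact LinearMap.toMatrix'_toLin' P
  rw [Matrix.rank, hrange, ← htr, h2]


lemma card_le_of_span_range {M : Type*} [AddCommGroup M] [Module ℝ M]
    {a b : ℕ} {f : Fin a → M} (hf : LinearIndependent ℝ f)
    (g : Fin b → M) (hmem : ∀ x, f x ∈ Submodule.span ℝ (Set.range g)) :
    a ≤ b := by
  classical
  have hfin : Module.Finite ℝ (Submodule.span ℝ (Set.range g)) :=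
    Module.Finite.span_of_finite ℝ (Set.finite_range g)
  have hli : LinearIndependent ℝ (fun x : Fin a =>
      (⟨f x, hmem x⟩ : Submodule.span ℝ (Set.range g))) := by
    apply LinearIndependent.of_comp (Submodule.span ℝ (Set.range g)).subtype
    exact hf
  have h1 := hli.fintype_card_le_finrank
  have h2 : Module.finrank ℝ (Submodule.span ℝ (Set.range g)) ≤ b := by
    refine le_trans (finrank_span_le_card (R := ℝ) (Set.range g)) ?_
    rw [Set.toFinset_range]
    exact le_trans Finset.card_image_le (by simp)
  simpa using le_trans h1 h2

set_option maxHeartbeats 1000000 in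
/-- Explicit expression for the Krein numbers of a coherent configuration with basis (B1)-(B4): `q_{ℓ,ℓ',n}^{(i,j)} = (√(|X_i||X_j|) m_ℓ m_{ℓ'} / |X_i|²) Σ_ν p_ν(ℓ) p_ν(ℓ') p_ν(n) / (k_ν)²`. -/
theorem stmt14
    (nf : ℕ) (X : Fin nf → Type) [∀ i, Fintype (X i)] [∀ i, DecidableEq (X i)]
    (r : Fin nf → Fin nf → ℕ)
    (A E : Fin nf → Fin nf → ℕ → Matrix ((i : Fin nf) × X i) ((i : Fin nf) × X i) ℝ)
    (q : Fin nf → Fin nf → ℕ → ℕ → ℕ → ℝ)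
    (Pm Qm : Fin nf → Fin nf → ℕ → ℕ → ℝ)
    (k : Fin nf → Fin nf → ℕ → ℝ)
    (hAsupp : ∀ i j ℓ, ℓ ≤ r i j → ∀ v w : (i : Fin nf) × X i,
      (v.1 ≠ i ∨ w.1 ≠ j) → A i j ℓ v w = 0)
    (hA01 : ∀ i j ℓ v w, A i j ℓ v w = 0 ∨ A i j ℓ v w = 1)
    (hA0 : ∀ i, A i i 0 = Matrix.of fun v w => if v = w ∧ v.1 = i then 1 else 0)
    (hApart : ∀ i j (v w : (i : Fin nf) × X i), v.1 = i → w.1 = j →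
      ∑ ℓ ∈ Finset.range (r i j + 1), A i j ℓ v w = 1)
    (hAtrans : ∀ i j ℓ, ℓ ≤ r i j → (A i j ℓ)ᵀ = A j i ℓ)
    (hk : ∀ i j ℓ, ℓ ≤ r i j → ∀ v : (i : Fin nf) × X i, v.1 = i →
      ∑ w, A i j ℓ v w = k i j ℓ)
    (hEsupp : ∀ i j ℓ, ℓ ≤ r i j → ∀ v w : (i : Fin nf) × X i,
      (v.1 ≠ i ∨ w.1 ≠ j) → E i j ℓ v w = 0)
    (hB1 : ∀ i j, E i j 0 = Matrix.of fun v w =>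
      if v.1 = i ∧ w.1 = j then
        (Real.sqrt ((Fintype.card (X i) : ℝ) * (Fintype.card (X j) : ℝ)))⁻¹ else 0)
    (hB2 : ∀ i j, LinearIndependent ℝ (fun ℓ : Fin (r i j + 1) => E i j (ℓ : ℕ)))
    (hB3 : ∀ i j ℓ, ℓ ≤ r i j → (E i j ℓ)ᵀ = E j i ℓ)
    (hB4 : ∀ i j i' j' ℓ ℓ', ℓ ≤ r i j → ℓ' ≤ r i' j' →
      E i j ℓ * E i' j' ℓ' = if ℓ = ℓ' ∧ j = i' then E i j' ℓ else 0)
    (hq : ∀ i j ℓ m, ℓ ≤ r i j → m ≤ r i j →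
      (E i j ℓ).hadamard (E i j m) =
        (Real.sqrt ((Fintype.card (X i) : ℝ) * (Fintype.card (X j) : ℝ)))⁻¹ •
          ∑ n ∈ Finset.range (r i j + 1), q i j ℓ m n • E i j n)
    (hP : ∀ i j h, h ≤ r i j →
      A i j h = ∑ ℓ ∈ Finset.range (r i j + 1), Pm i j h ℓ • E i j ℓ)
    (hQ : ∀ i j h, h ≤ r i j →
      E i j h = (Real.sqrt ((Fintype.card (X i) : ℝ) * (Fintype.card (X j) : ℝ)))⁻¹ •
        ∑ ℓ ∈ Finset.range (r i j + 1), Qm i j h ℓ • A i j ℓ)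
    (i j : Fin nf) (ℓ ℓ' n : ℕ) (hℓ : ℓ ≤ r i j) (hℓ' : ℓ' ≤ r i j) (hn : n ≤ r i j) :
    q i j ℓ ℓ' n =
      Real.sqrt ((Fintype.card (X i) : ℝ) * (Fintype.card (X j) : ℝ)) *
        ((E i j ℓ).rank : ℝ) * ((E i j ℓ').rank : ℝ) / (Fintype.card (X i) : ℝ) ^ 2 *
        ∑ ν ∈ Finset.range (r i j + 1),
          (1 / (k i j ν) ^ 2) * (Pm i j ν ℓ * Pm i j ν ℓ' * Pm i j ν n) := by
  classical
  set Ni : ℝ := (Fintype.card (X i) : ℝ) with hNidef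
  set Nj : ℝ := (Fintype.card (X j) : ℝ) with hNjdef
  set s : ℝ := Real.sqrt (Ni * Nj) with hsdef
  set c : ℝ := s⁻¹ with hcdef
  have hmr : ∀ {μ : ℕ}, μ ∈ Finset.range (r i j + 1) → μ ≤ r i j := by
    intro μ h; exact Nat.lt_succ_iff.mp (Finset.mem_range.mp h)
  -- E's are nonzero
  have hEne : ∀ m, m ≤ r i j → E i j m ≠ 0 := by
    intro m hm
    exact (hB2 i j).ne_zero ⟨m, by omega⟩
  have hXi : Nonempty (X i) := by
    by_contra h
    refine hEne 0 (Nat.zero_le _) ?_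
    ext v w
    rw [Matrix.zero_apply]
    exact hEsupp i j 0 (Nat.zero_le _) v w (Or.inl fun hv => h ⟨hv ▸ v.2⟩)
  have hXj : Nonempty (X j) := by
    by_contra h
    refine hEne 0 (Nat.zero_le _) ?_
    ext v w
    rw [Matrix.zero_apply]
    exact hEsupp i j 0 (Nat.zero_le _) v w (Or.inr fun hw => h ⟨hw ▸ w.2⟩)
  have hNi0 : 0 < Ni := by rw [hNidef]; exact_mod_cast Fintype.card_pos
  have hNj0 : 0 < Nj := by rw [hNjdef]; exact_mod_cast Fintype.card_pos
  have hs0 : 0 < s := Real.sqrt_pos.mpr (mul_pos hNi0 hNj0)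
  have hc0 : 0 < c := by rw [hcdef]; exact inv_pos.mpr hs0
  have hsc : s * c = 1 := by rw [hcdef]; exact mul_inv_cancel₀ hs0.ne'
  -- nonnegativity of A entries
  have hA_nonneg : ∀ (ν : ℕ) v w, 0 ≤ A i j ν v w := by
    intro ν v w; rcases hA01 i j ν v w with h | h <;> rw [h] <;> norm_num
  -- sigma-type sum helper
  have hsigma : ∀ f : ((a : Fin nf) × X a) → ℝ,
      ∑ v, f v = ∑ a : Fin nf, ∑ x : X a, f ⟨a, x⟩ := by
    intro f; rw [← Finset.univ_sigma_univ, Finset.sum_sigma]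
  have hsum_ind : ∀ g : ℝ, ∑ v : (a : Fin nf) × X a, (if v.1 = i then g else 0) = Ni * g := by
    intro g
    rw [hsigma]
    have h1 : ∀ a : Fin nf, (∑ x : X a, if a = i then g else 0)
        = if a = i then Ni * g else 0 := by
      intro a
      by_cases h : a = i
      · subst h
        simp [Finset.sum_const, Finset.card_univ, nsmul_eq_mul, hNidef]
      · simp [h]
    rw [Finset.sum_congr rfl fun a _ => h1 a, Finset.sum_ite_eq' Finset.univ i
      fun _ => Ni * g, if_pos (Finset.mem_univ i)]
  -- row sums
  have hAsum : ∀ ν, ν ≤ r i j → ∑ v, ∑ w, A i j ν v w = Ni * k i j ν := by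
    intro ν hν
    have h1 : ∀ v : (a : Fin nf) × X a,
        (∑ w, A i j ν v w) = if v.1 = i then k i j ν else 0 := by
      intro v
      by_cases h : v.1 = i
      · rw [if_pos h]; exact hk i j ν hν v h
      · rw [if_neg h]; exact Finset.sum_eq_zero fun w _ => hAsupp i j ν hν v w (Or.inl h)
    rw [Finset.sum_congr rfl fun v _ => h1 v, hsum_ind]
  -- block support of A
  have hAblock : ∀ ν, ν ≤ r i j → ∀ v w, A i j ν v w ≠ 0 → v.1 = i ∧ w.1 = j := by
    intro ν hν v w hne
    by_contra hc
    exact hne (hAsupp i j ν hν v w (by tauto))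
  -- Hadamard orthogonality of A's
  have hAA : ∀ μ, μ ≤ r i j → ∀ ν, ν ≤ r i j → ∀ v w,
      A i j μ v w * A i j ν v w = if μ = ν then A i j ν v w else 0 := by
    intro μ hμ ν hν v w
    by_cases he : μ = ν
    · subst he
      rw [if_pos rfl]
      rcases hA01 i j μ v w with h | h <;> rw [h] <;> ring
    · rw [if_neg he]
      rcases hA01 i j μ v w with h1 | h1
      · rw [h1]; ring
      rcases hA01 i j ν v w with h2 | h2
      · rw [h2]; ring
      exfalso
      obtain ⟨hv, hw⟩ := hAblock μ hμ v w (by rw [h1]; norm_num)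
      have hsum := hApart i j v w hv hw
      have hle : ({μ, ν} : Finset ℕ) ⊆ Finset.range (r i j + 1) := by
        intro x hx
        simp only [Finset.mem_insert, Finset.mem_singleton] at hx
        rcases hx with rfl | rfl <;> simp <;> omega
      have h2le : ∑ x ∈ ({μ, ν} : Finset ℕ), A i j x v w
          ≤ ∑ x ∈ Finset.range (r i j + 1), A i j x v w :=
        Finset.sum_le_sum_of_subset_of_nonneg hle fun x _ _ => hA_nonneg x v w
      rw [Finset.sum_pair he, h1, h2, hsum] at h2le
      linarith
  -- no A can vanish
  have hAne : ∀ ν₀, ν₀ ≤ r i j → A i j ν₀ ≠ 0 := by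
    intro ν₀ hν₀ h0
    have hgood : ¬ (r i j + 1 ≤ r i j) := by omega
    refine hgood (card_le_of_span_range (hB2 i j)
      (fun t : Fin (r i j) => A i j (if (t : ℕ) < ν₀ then (t : ℕ) else (t : ℕ) + 1)) ?_)
    intro m
    rw [hQ i j (m : ℕ) (by omega)]
    refine Submodule.smul_mem _ _ (Submodule.sum_mem _ fun ν hν => ?_)
    have hν' : ν ≤ r i j := Nat.lt_succ_iff.mp (Finset.mem_range.mp hν)
    by_cases he : ν = ν₀
    · rw [he, h0, smul_zero]; exact Submodule.zero_mem _
    · refine Submodule.smul_mem _ _ (Submodule.subset_span ?_)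
      rcases Nat.lt_or_ge ν ν₀ with hlt | hge
      · exact ⟨⟨ν, by omega⟩, by simp [hlt]⟩
      · have hgt : ν₀ < ν := by omega
        refine ⟨⟨ν - 1, by omega⟩, ?_⟩
        simp only [Fin.val_mk]
        rw [if_neg (by omega : ¬ ν - 1 < ν₀), show ν - 1 + 1 = ν from by omega]
  -- r i j ≤ r j i
  have hrji : r i j ≤ r j i := by
    by_contra hcon
    push_neg at hcon
    refine hAne (r i j) le_rfl ?_
    ext v w
    rw [Matrix.zero_apply]
    by_cases hb : v.1 = i ∧ w.1 = j
    · obtain ⟨hv, hw⟩ := hb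
      have h1 : ∑ m ∈ Finset.range (r i j + 1), A i j m v w = 1 := hApart i j v w hv hw
      have h2 : ∑ m ∈ Finset.range (r j i + 1), A i j m v w = 1 := by
        have he : ∀ m ∈ Finset.range (r j i + 1), A i j m v w = A j i m w v := by
          intro m hm
          rw [← hAtrans i j m (by have := Finset.mem_range.mp hm; omega)]
          rfl
        rw [Finset.sum_congr rfl he]
        exact hApart j i w v hw hv
      have hsub : Finset.range (r j i + 1) ⊆ Finset.range (r i j + 1) := by
        intro x hx
        simp only [Finset.mem_range] at hx ⊢
        omega
      have h3 := Finset.sum_sdiff (f := fun m => A i j m v w) hsub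
      rw [h1, h2] at h3
      have h4 : ∑ m ∈ Finset.range (r i j + 1) \ Finset.range (r j i + 1),
          A i j m v w = 0 := by linarith
      have hmem : r i j ∈ Finset.range (r i j + 1) \ Finset.range (r j i + 1) := by
        simp only [Finset.mem_sdiff, Finset.mem_range]
        omega
      exact (Finset.sum_eq_zero_iff_of_nonneg fun x _ => hA_nonneg x v w).mp h4 _ hmem
    · exact hAsupp i j (r i j) le_rfl v w (by tauto)
  -- index bound transfer to diagonal fibers
  have hrjj : ∀ m, m ≤ r i j → m ≤ r j j := by
    intro m hm
    by_contra hgt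
    push_neg at hgt
    refine hEne m hm ?_
    have hid : E i j m * A j j 0 = E i j m := by
      ext v w
      rw [Matrix.mul_apply, hA0 j]
      have h1 : ∀ u : (a : Fin nf) × X a,
          E i j m v u * Matrix.of (fun v w : (a : Fin nf) × X a =>
            if v = w ∧ v.1 = j then (1 : ℝ) else 0) u w
          = if u = w then (if w.1 = j then E i j m v w else 0) else 0 := by
        intro u
        by_cases h1 : u = w
        · subst h1
          by_cases h2 : u.1 = j <;> simp [h2]
        · rw [Matrix.of_apply, if_neg (fun hc => h1 hc.1), mul_zero, if_neg h1]
      rw [Finset.sum_congr rfl fun u _ => h1 u,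
        Finset.sum_ite_eq' Finset.univ w _, if_pos (Finset.mem_univ w)]
      by_cases h2 : w.1 = j
      · rw [if_pos h2]
      · rw [if_neg h2]
        exact (hEsupp i j m hm v w (Or.inr h2)).symm
    rw [← hid, hP j j 0 (Nat.zero_le _), Finset.mul_sum]
    refine Finset.sum_eq_zero fun μ hμ => ?_
    have hμ' : μ ≤ r j j := Nat.lt_succ_iff.mp (Finset.mem_range.mp hμ)
    rw [Matrix.mul_smul, hB4 i j j j m μ hm hμ', if_neg (fun hc => by omega), smul_zero]
  have hrii : ∀ m, m ≤ r i j → m ≤ r i i := by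
    intro m hm
    by_contra hgt
    push_neg at hgt
    refine hEne m hm ?_
    have hid : A i i 0 * E i j m = E i j m := by
      ext v w
      rw [Matrix.mul_apply, hA0 i]
      have h1 : ∀ u : (a : Fin nf) × X a,
          Matrix.of (fun v w : (a : Fin nf) × X a =>
            if v = w ∧ v.1 = i then (1 : ℝ) else 0) v u * E i j m u w
          = if u = v then (if v.1 = i then E i j m v w else 0) else 0 := by
        intro u
        by_cases h1 : u = v
        · subst h1
          by_cases h2 : u.1 = i <;> simp [h2]
        · rw [Matrix.of_apply, if_neg (fun hc => h1 hc.1.symm), zero_mul, if_neg h1]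
      rw [Finset.sum_congr rfl fun u _ => h1 u,
        Finset.sum_ite_eq' Finset.univ v _, if_pos (Finset.mem_univ v)]
      by_cases h2 : v.1 = i
      · rw [if_pos h2]
      · rw [if_neg h2]
        exact (hEsupp i j m hm v w (Or.inl h2)).symm
    rw [← hid, hP i i 0 (Nat.zero_le _), Finset.sum_mul]
    refine Finset.sum_eq_zero fun μ hμ => ?_
    have hμ' : μ ≤ r i i := Nat.lt_succ_iff.mp (Finset.mem_range.mp hμ)
    rw [Matrix.smul_mul, hB4 i i i j μ m hμ' hm, if_neg (fun hc => by omega), smul_zero]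
  -- products of E's
  have hEmulT : ∀ l, l ≤ r i j → ∀ p, p ≤ r i j →
      E i j l * (E i j p)ᵀ = if l = p then E i i l else 0 := by
    intro l hl p hp
    rw [hB3 i j p hp, hB4 i j j i l p hl (le_trans hp hrji)]
    by_cases he : l = p <;> simp [he]
  have hidem : ∀ l, l ≤ r i j → E i i l * E i i l = E i i l := by
    intro l hl
    rw [hB4 i i i i l l (hrii l hl) (hrii l hl)]
    simp
  have hEMl : ∀ l, l ≤ r i j → E i i l * E i j l = E i j l := by
    intro l hl
    rw [hB4 i i i j l l (hrii l hl) hl]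
    simp
  -- trace = rank
  have htr : ∀ l, l ≤ r i j → (E i i l).trace = ((E i j l).rank : ℝ) := by
    intro l hl
    rw [trace_eq_rank_of_idem _ (hidem l hl)]
    congr 1
    apply le_antisymm
    · have h1 : E i i l = E i j l * (E i j l)ᵀ := by
        rw [hEmulT l hl l hl, if_pos rfl]
      rw [h1]
      exact Matrix.rank_mul_le_left _ _
    · conv_lhs => rw [← hEMl l hl]
      exact Matrix.rank_mul_le_left _ _
  -- entrywise double-sum as trace
  have hdot_trace : ∀ M N : Matrix ((a : Fin nf) × X a) ((a : Fin nf) × X a) ℝ,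
      ∑ v, ∑ w, M v w * N v w = (M * Nᵀ).trace := by
    intro M N
    rw [Matrix.trace]
    simp [Matrix.diag, Matrix.mul_apply, Matrix.transpose_apply]
  -- Gram orthogonality of E's
  have hGram : ∀ l, l ≤ r i j → ∀ p, p ≤ r i j →
      ∑ v, ∑ w, E i j l v w * E i j p v w
        = if l = p then ((E i j l).rank : ℝ) else 0 := by
    intro l hl p hp
    rw [hdot_trace, hEmulT l hl p hp]
    by_cases he : l = p
    · rw [if_pos he, if_pos he, htr l hl]
    · rw [if_neg he, if_neg he, Matrix.trace_zero]
  -- entrywise expansions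
  have hPe : ∀ ν, ν ≤ r i j → ∀ v w, A i j ν v w
      = ∑ p ∈ Finset.range (r i j + 1), Pm i j ν p * E i j p v w := by
    intro ν hν v w
    rw [hP i j ν hν]
    simp [Matrix.sum_apply]
  have hQe : ∀ l, l ≤ r i j → ∀ v w, E i j l v w
      = ∑ μ ∈ Finset.range (r i j + 1), (c * Qm i j l μ) * A i j μ v w := by
    intro l hl v w
    rw [hQ i j l hl, ← hNidef, ← hNjdef, ← hsdef, ← hcdef]
    simp only [Matrix.smul_apply, Matrix.sum_apply, smul_eq_mul]
    rw [Finset.mul_sum]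
    exact Finset.sum_congr rfl fun μ _ => by ring
  -- ⟨E_l, A_ν⟩ computed via P
  have hdotEA1 : ∀ l, l ≤ r i j → ∀ ν, ν ≤ r i j →
      ∑ v, ∑ w, E i j l v w * A i j ν v w = Pm i j ν l * ((E i j l).rank : ℝ) := by
    intro l hl ν hν
    calc ∑ v, ∑ w, E i j l v w * A i j ν v w
        = ∑ v, ∑ w, ∑ p ∈ Finset.range (r i j + 1),
            Pm i j ν p * (E i j l v w * E i j p v w) := by
          refine Finset.sum_congr rfl fun v _ => Finset.sum_congr rfl fun w _ => ?_
          rw [hPe ν hν v w, Finset.mul_sum]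
          exact Finset.sum_congr rfl fun p _ => by ring
      _ = ∑ p ∈ Finset.range (r i j + 1), ∑ v, ∑ w,
            Pm i j ν p * (E i j l v w * E i j p v w) := by
          rw [show (∑ v, ∑ w, ∑ p ∈ Finset.range (r i j + 1),
              Pm i j ν p * (E i j l v w * E i j p v w))
            = ∑ v, ∑ p ∈ Finset.range (r i j + 1), ∑ w,
              Pm i j ν p * (E i j l v w * E i j p v w) from
            Finset.sum_congr rfl fun v _ => Finset.sum_comm]
          exact Finset.sum_comm
      _ = ∑ p ∈ Finset.range (r i j + 1),
            Pm i j ν p * ∑ v, ∑ w, E i j l v w * E i j p v w := by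
          refine Finset.sum_congr rfl fun p _ => ?_
          simp_rw [← Finset.mul_sum]
      _ = Pm i j ν l * ((E i j l).rank : ℝ) := by
          rw [Finset.sum_congr rfl fun p hp => by rw [hGram l hl p (hmr hp)]]
          simp_rw [mul_ite, mul_zero]
          rw [Finset.sum_ite_eq (Finset.range (r i j + 1)) l
            fun p => Pm i j ν p * ((E i j l).rank : ℝ),
            if_pos (Finset.mem_range.mpr (by omega))]
  -- ⟨E_l, A_ν⟩ computed via Q
  have hdotAA : ∀ μ, μ ≤ r i j → ∀ ν, ν ≤ r i j →
      ∑ v, ∑ w, A i j μ v w * A i j ν v w = if μ = ν then Ni * k i j ν else 0 := by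
    intro μ hμ ν hν
    by_cases he : μ = ν
    · subst he
      rw [if_pos rfl]
      rw [Finset.sum_congr rfl fun v _ => Finset.sum_congr rfl fun w _ => by
        rw [hAA μ hμ μ hμ v w, if_pos rfl]; rfl]
      exact hAsum μ hμ
    · rw [if_neg he]
      rw [Finset.sum_congr rfl fun v _ => Finset.sum_congr rfl fun w _ => by
        rw [hAA μ hμ ν hν v w, if_neg he]]
      simp
  have hdotEA2 : ∀ l, l ≤ r i j → ∀ ν, ν ≤ r i j →
      ∑ v, ∑ w, E i j l v w * A i j ν v w = c * Qm i j l ν * (Ni * k i j ν) := by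
    intro l hl ν hν
    calc ∑ v, ∑ w, E i j l v w * A i j ν v w
        = ∑ v, ∑ w, ∑ μ ∈ Finset.range (r i j + 1),
            (c * Qm i j l μ) * (A i j μ v w * A i j ν v w) := by
          refine Finset.sum_congr rfl fun v _ => Finset.sum_congr rfl fun w _ => ?_
          rw [hQe l hl v w, Finset.sum_mul]
          exact Finset.sum_congr rfl fun μ _ => by ring
      _ = ∑ μ ∈ Finset.range (r i j + 1), ∑ v, ∑ w,
            (c * Qm i j l μ) * (A i j μ v w * A i j ν v w) := by
          rw [show (∑ v, ∑ w, ∑ μ ∈ Finset.range (r i j + 1),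
              (c * Qm i j l μ) * (A i j μ v w * A i j ν v w))
            = ∑ v, ∑ μ ∈ Finset.range (r i j + 1), ∑ w,
              (c * Qm i j l μ) * (A i j μ v w * A i j ν v w) from
            Finset.sum_congr rfl fun v _ => Finset.sum_comm]
          exact Finset.sum_comm
      _ = ∑ μ ∈ Finset.range (r i j + 1),
            (c * Qm i j l μ) * (if μ = ν then Ni * k i j ν else 0) := by
          refine Finset.sum_congr rfl fun μ hμ => ?_
          simp_rw [← Finset.mul_sum]
          rw [show (∑ v, ∑ w, A i j μ v w * A i j ν v w)
            = if μ = ν then Ni * k i j ν else 0 from hdotAA μ (hmr hμ) ν hν]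
      _ = c * Qm i j l ν * (Ni * k i j ν) := by
          simp_rw [mul_ite, mul_zero]
          rw [Finset.sum_ite_eq' (Finset.range (r i j + 1)) ν
            fun μ => (c * Qm i j l μ) * (Ni * k i j ν),
            if_pos (Finset.mem_range.mpr (by omega))]
  -- the key scalar relation
  have hdagger : ∀ l, l ≤ r i j → ∀ ν, ν ≤ r i j →
      c * Qm i j l ν * (Ni * k i j ν) = Pm i j ν l * ((E i j l).rank : ℝ) := by
    intro l hl ν hν
    rw [← hdotEA1 l hl ν hν, ← hdotEA2 l hl ν hν]
  -- valencies are nonzero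
  have hknz : ∀ ν, ν ≤ r i j → k i j ν ≠ 0 := by
    intro ν hν hk0
    refine hAne ν hν ?_
    ext v w
    rw [Matrix.zero_apply]
    by_cases hv : v.1 = i
    · have hrow := hk i j ν hν v hv
      rw [hk0] at hrow
      exact (Finset.sum_eq_zero_iff_of_nonneg fun w _ => hA_nonneg ν v w).mp hrow w
        (Finset.mem_univ w)
    · exact hAsupp i j ν hν v w (Or.inl hv)
  -- explicit Qm
  have hQmex : ∀ l, l ≤ r i j → ∀ ν, ν ≤ r i j →
      Qm i j l ν = s * (Pm i j ν l * ((E i j l).rank : ℝ)) / (Ni * k i j ν) := by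
    intro l hl ν hν
    have hd := hdagger l hl ν hν
    have hnz : Ni * k i j ν ≠ 0 := mul_ne_zero hNi0.ne' (hknz ν hν)
    rw [eq_div_iff hnz]
    calc Qm i j l ν * (Ni * k i j ν)
        = s * (c * Qm i j l ν * (Ni * k i j ν)) := by
          rw [show s * (c * Qm i j l ν * (Ni * k i j ν))
            = (s * c) * (Qm i j l ν * (Ni * k i j ν)) from by ring, hsc, one_mul]
      _ = s * (Pm i j ν l * ((E i j l).rank : ℝ)) := by rw [hd]
  -- identify q via linear independence
  have hqmat := hq i j ℓ ℓ' hℓ hℓ'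
  rw [← hNidef, ← hNjdef, ← hsdef, ← hcdef] at hqmat
  have hentry : ∀ v w, E i j ℓ v w * E i j ℓ' v w
      = c * ∑ p ∈ Finset.range (r i j + 1), q i j ℓ ℓ' p * E i j p v w := by
    intro v w
    have h := congrFun (congrFun hqmat v) w
    simpa [Matrix.hadamard_apply, Matrix.smul_apply, Matrix.sum_apply, smul_eq_mul] using h
  set G : ℕ → ℝ := fun p => c * ∑ ν ∈ Finset.range (r i j + 1),
    Qm i j ℓ ν * Qm i j ℓ' ν * Pm i j ν p with hGdef
  have hEE : ∀ v w, E i j ℓ v w * E i j ℓ' v w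
      = c * ∑ p ∈ Finset.range (r i j + 1), G p * E i j p v w := by
    intro v w
    rw [hQe ℓ hℓ v w, hQe ℓ' hℓ' v w, Finset.sum_mul_sum]
    calc ∑ μ ∈ Finset.range (r i j + 1), ∑ ν ∈ Finset.range (r i j + 1),
          ((c * Qm i j ℓ μ) * A i j μ v w) * ((c * Qm i j ℓ' ν) * A i j ν v w)
        = ∑ μ ∈ Finset.range (r i j + 1), ∑ ν ∈ Finset.range (r i j + 1),
          (c * Qm i j ℓ μ) * (c * Qm i j ℓ' ν) * (A i j μ v w * A i j ν v w) := by
          exact Finset.sum_congr rfl fun μ _ => Finset.sum_congr rfl fun ν _ => by ring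
      _ = ∑ μ ∈ Finset.range (r i j + 1),
          (c * Qm i j ℓ μ) * (c * Qm i j ℓ' μ) * A i j μ v w := by
          refine Finset.sum_congr rfl fun μ hμ => ?_
          rw [Finset.sum_congr rfl fun ν hν => by
            rw [hAA μ (hmr hμ) ν (hmr hν) v w]]
          simp_rw [mul_ite, mul_zero]
          rw [Finset.sum_ite_eq (Finset.range (r i j + 1)) μ
            fun ν => (c * Qm i j ℓ μ) * (c * Qm i j ℓ' ν) * A i j ν v w,
            if_pos hμ]
      _ = ∑ μ ∈ Finset.range (r i j + 1), ∑ p ∈ Finset.range (r i j + 1),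
          (c * Qm i j ℓ μ) * (c * Qm i j ℓ' μ) * (Pm i j μ p * E i j p v w) := by
          refine Finset.sum_congr rfl fun μ hμ => ?_
          rw [hPe μ (hmr hμ) v w, Finset.mul_sum]
      _ = c * ∑ p ∈ Finset.range (r i j + 1), G p * E i j p v w := by
          rw [Finset.sum_comm, Finset.mul_sum]
          refine Finset.sum_congr rfl fun p _ => ?_
          rw [hGdef]
          simp only []
          rw [Finset.mul_sum, Finset.sum_mul, Finset.mul_sum]
          exact Finset.sum_congr rfl fun μ _ => by ring
  have hlin : ∑ p ∈ Finset.range (r i j + 1),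
      (q i j ℓ ℓ' p - G p) • E i j p = 0 := by
    ext v w
    simp only [Matrix.sum_apply, Matrix.smul_apply, Matrix.zero_apply, smul_eq_mul, sub_mul]
    rw [Finset.sum_sub_distrib]
    have h1 := (hentry v w).symm.trans (hEE v w)
    have h2 := mul_left_cancel₀ hc0.ne' h1
    rw [h2, sub_self]
  have hfin : ∀ p : Fin (r i j + 1), q i j ℓ ℓ' (p : ℕ) - G (p : ℕ) = 0 := by
    have h0 : ∑ p : Fin (r i j + 1),
        (q i j ℓ ℓ' (p : ℕ) - G (p : ℕ)) • E i j (p : ℕ) = 0 := by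
      rw [Fin.sum_univ_eq_sum_range (fun p => (q i j ℓ ℓ' p - G p) • E i j p)]
      exact hlin
    exact fun p => Fintype.linearIndependent_iff.mp (hB2 i j) _ h0 p
  have hqval : q i j ℓ ℓ' n = G n := by
    have h := hfin ⟨n, by omega⟩
    simpa [sub_eq_zero] using h
  -- final computation
  rw [hqval, hGdef]
  simp only []
  rw [Finset.mul_sum, Finset.mul_sum]
  refine Finset.sum_congr rfl fun ν hν => ?_
  have hν' : ν ≤ r i j := hmr hν
  rw [hQmex ℓ hℓ ν hν', hQmex ℓ' hℓ' ν hν', hcdef]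
  have hknz' := hknz ν hν'
  field_simp
end

section
/- For a coherent configuration with basis satisfying (B1)-(B4), the intersection numbers admit the explicit expression p_{ℓ,m,n}^{(i,j,h)} = (k_ℓ^{(i,j)} k_m^{(j,h)} / |X_h|) Σ_ν (1/(m_ν^{(i,i)})^2) q_ν^{(i,j)}(ℓ) q_ν^{(j,h)}(m) q_ν^{(h,i)}(n), the sum over ν from 0 to min(r̃_{i,j}, r̃_{j,h}, r̃_{h,i}). -/
open Matrix Finset
open Module Submodule

lemma li_of_span {V : Type*} [AddCommGroup V] [Module ℝ V] [FiniteDimensional ℝ V]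
    {n : ℕ} {v w : Fin n → V} (hv : LinearIndependent ℝ v)
    (hsub : ∀ i, v i ∈ Submodule.span ℝ (Set.range w)) : LinearIndependent ℝ w := by
  rw [linearIndependent_iff_card_eq_finrank_span]
  have h1 : Submodule.span ℝ (Set.range v) ≤ Submodule.span ℝ (Set.range w) :=
    Submodule.span_le.mpr (Set.range_subset_iff.mpr hsub)
  have h2 := finrank_span_eq_card hv
  have h3 := finrank_range_le_card (R := ℝ) w
  have h4 : finrank ℝ (span ℝ (Set.range v)) ≤ finrank ℝ (span ℝ (Set.range w)) :=
    Submodule.finrank_mono h1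
  simp only [Fintype.card_fin] at *
  unfold Set.finrank at *
  omega

lemma collapse3 (R1 R2 R3 : ℕ) (f1 f2 f3 t : ℕ → ℝ) :
    ∑ a ∈ range (R1+1), ∑ b ∈ range (R2+1), ∑ c ∈ range (R3+1),
      f1 a * f2 b * f3 c * (if a = b ∧ b = c then t a else 0)
    = ∑ ν ∈ range (min (min R1 R2) R3 + 1), f1 ν * f2 ν * f3 ν * t ν := by
  have step1 : ∀ a b, ∑ c ∈ range (R3+1),
      f1 a * f2 b * f3 c * (if a = b ∧ b = c then t a else 0)
      = if a = b ∧ b ≤ R3 then f1 a * f2 b * f3 b * t a else 0 := by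
    intro a b
    by_cases hab : a = b
    · simp only [hab, true_and, mul_ite, mul_zero]
      rw [Finset.sum_ite_eq (range (R3+1)) b (fun c => f1 b * f2 b * f3 c * t b)]
      simp [Nat.lt_succ_iff]
    · simp [hab]
  have step2 : ∀ a, ∑ b ∈ range (R2+1),
      (if a = b ∧ b ≤ R3 then f1 a * f2 b * f3 b * t a else 0)
      = if a ≤ R2 ∧ a ≤ R3 then f1 a * f2 a * f3 a * t a else 0 := by
    intro a
    have e : ∀ b : ℕ, (if a = b ∧ b ≤ R3 then f1 a * f2 b * f3 b * t a else 0)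
        = if a = b then (if b ≤ R3 then f1 a * f2 b * f3 b * t a else 0) else 0 := by
      intro b; by_cases h1 : a = b <;> simp [h1]
    rw [Finset.sum_congr rfl (fun b _ => e b)]
    rw [Finset.sum_ite_eq (range (R2+1)) a
      (fun b => if b ≤ R3 then f1 a * f2 b * f3 b * t a else 0)]
    simp only [Finset.mem_range, Nat.lt_succ_iff]
    by_cases h1 : a ≤ R2 <;> by_cases h2 : a ≤ R3 <;> simp [h1, h2]
  calc ∑ a ∈ range (R1+1), ∑ b ∈ range (R2+1), ∑ c ∈ range (R3+1),
      f1 a * f2 b * f3 c * (if a = b ∧ b = c then t a else 0)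
      = ∑ a ∈ range (R1+1), if a ≤ R2 ∧ a ≤ R3 then f1 a * f2 a * f3 a * t a else 0 := by
        refine Finset.sum_congr rfl fun a _ => ?_
        rw [Finset.sum_congr rfl (fun b _ => step1 a b), step2 a]
    _ = ∑ a ∈ (range (R1+1)).filter (fun a => a ≤ R2 ∧ a ≤ R3), f1 a * f2 a * f3 a * t a := by
        rw [Finset.sum_filter]
    _ = ∑ ν ∈ range (min (min R1 R2) R3 + 1), f1 ν * f2 ν * f3 ν * t ν := by
        refine Finset.sum_congr ?_ (fun _ _ => rfl)
        ext a
        simp only [Finset.mem_filter, Finset.mem_range, Nat.lt_succ_iff, lt_min_iff]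
        omega

lemma trace_mul_transpose_eq {S : Type*} [Fintype S] [DecidableEq S] (M N : Matrix S S ℝ) :
    (M * Nᵀ).trace = ∑ v, ∑ w, M v w * N v w := by
  simp [Matrix.trace, Matrix.diag, Matrix.mul_apply]


lemma sum3_comm (s t u : Finset ℕ) (f : ℕ → ℕ → ℕ → ℝ) :
    (∑ c ∈ u, ∑ b ∈ t, ∑ a ∈ s, f a b c) = ∑ a ∈ s, ∑ b ∈ t, ∑ c ∈ u, f a b c := by
  rw [Finset.sum_comm]
  rw [Finset.sum_congr rfl (fun b _ => Finset.sum_comm)]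
  rw [Finset.sum_comm]


/-- Explicit expression for the intersection numbers of a coherent configuration with basis (B1)-(B4): `p_{ℓ,m,n}^{(i,j,h)} = (k_ℓ^{(i,j)} k_m^{(j,h)} / |X_h|) Σ_ν q_ν^{(i,j)}(ℓ) q_ν^{(j,h)}(m) q_ν^{(h,i)}(n) / (m_ν^{(i,i)})²`, the sum over `ν` up to `min(r̃_{i,j}, r̃_{j,h}, r̃_{h,i})`, with `m_ν^{(i,i)} = tr E_ν^{(i,i)}`. -/
theorem stmt15
    (nf : ℕ) (X : Fin nf → Type) [∀ i, Fintype (X i)] [∀ i, DecidableEq (X i)]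
    (r : Fin nf → Fin nf → ℕ)
    (A E : Fin nf → Fin nf → ℕ → Matrix ((i : Fin nf) × X i) ((i : Fin nf) × X i) ℝ)
    (q : Fin nf → Fin nf → ℕ → ℕ → ℕ → ℝ)
    (Pm Qm : Fin nf → Fin nf → ℕ → ℕ → ℝ)
    (k : Fin nf → Fin nf → ℕ → ℝ)
    (hAsupp : ∀ i j ℓ, ℓ ≤ r i j → ∀ v w : (i : Fin nf) × X i,
      (v.1 ≠ i ∨ w.1 ≠ j) → A i j ℓ v w = 0)
    (hA01 : ∀ i j ℓ v w, A i j ℓ v w = 0 ∨ A i j ℓ v w = 1)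
    (hA0 : ∀ i, A i i 0 = Matrix.of fun v w => if v = w ∧ v.1 = i then 1 else 0)
    (hApart : ∀ i j (v w : (i : Fin nf) × X i), v.1 = i → w.1 = j →
      ∑ ℓ ∈ Finset.range (r i j + 1), A i j ℓ v w = 1)
    (hAtrans : ∀ i j ℓ, ℓ ≤ r i j → (A i j ℓ)ᵀ = A j i ℓ)
    (hk : ∀ i j ℓ, ℓ ≤ r i j → ∀ v : (i : Fin nf) × X i, v.1 = i →
      ∑ w, A i j ℓ v w = k i j ℓ)
    (hEsupp : ∀ i j ℓ, ℓ ≤ r i j → ∀ v w : (i : Fin nf) × X i,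
      (v.1 ≠ i ∨ w.1 ≠ j) → E i j ℓ v w = 0)
    (hB1 : ∀ i j, E i j 0 = Matrix.of fun v w =>
      if v.1 = i ∧ w.1 = j then
        (Real.sqrt ((Fintype.card (X i) : ℝ) * (Fintype.card (X j) : ℝ)))⁻¹ else 0)
    (hB2 : ∀ i j, LinearIndependent ℝ (fun ℓ : Fin (r i j + 1) => E i j (ℓ : ℕ)))
    (hB3 : ∀ i j ℓ, ℓ ≤ r i j → (E i j ℓ)ᵀ = E j i ℓ)
    (hB4 : ∀ i j i' j' ℓ ℓ', ℓ ≤ r i j → ℓ' ≤ r i' j' →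
      E i j ℓ * E i' j' ℓ' = if ℓ = ℓ' ∧ j = i' then E i j' ℓ else 0)
    (hq : ∀ i j ℓ m, ℓ ≤ r i j → m ≤ r i j →
      (E i j ℓ).hadamard (E i j m) =
        (Real.sqrt ((Fintype.card (X i) : ℝ) * (Fintype.card (X j) : ℝ)))⁻¹ •
          ∑ n ∈ Finset.range (r i j + 1), q i j ℓ m n • E i j n)
    (hP : ∀ i j h, h ≤ r i j →
      A i j h = ∑ ℓ ∈ Finset.range (r i j + 1), Pm i j h ℓ • E i j ℓ)
    (hQ : ∀ i j h, h ≤ r i j →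
      E i j h = (Real.sqrt ((Fintype.card (X i) : ℝ) * (Fintype.card (X j) : ℝ)))⁻¹ •
        ∑ ℓ ∈ Finset.range (r i j + 1), Qm i j h ℓ • A i j ℓ)
    (pint : Fin nf → Fin nf → Fin nf → ℕ → ℕ → ℕ → ℝ)
    (hpint : ∀ i j h ℓ m, ℓ ≤ r i j → m ≤ r j h →
      A i j ℓ * A j h m = ∑ n ∈ Finset.range (r i h + 1), pint i j h ℓ m n • A i h n)
    (i j h : Fin nf) (ℓ m n : ℕ) (hℓ : ℓ ≤ r i j) (hm : m ≤ r j h) (hn : n ≤ r i h) :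
    pint i j h ℓ m n =
      k i j ℓ * k j h m / (Fintype.card (X h) : ℝ) *
        ∑ ν ∈ Finset.range (min (min (r i j) (r j h)) (r h i) + 1),
          (1 / ((E i i ν).trace) ^ 2) * (Qm i j ν ℓ * Qm j h ν m * Qm h i ν n) := by
  classical
  -- Step A: all fibers nonempty
  have hXpos : ∀ p, 0 < Fintype.card (X p) := by
    intro p
    by_contra hc
    have hemp : IsEmpty (X p) := by
      rw [← Fintype.card_eq_zero_iff]; omega
    have hE0 : E p p 0 = 0 := by
      ext v w
      refine hEsupp p p 0 (Nat.zero_le _) v w (Or.inl fun hv => ?_)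
      exact hemp.elim (hv ▸ v.2)
    exact (hB2 p p).ne_zero ⟨0, Nat.succ_pos _⟩ hE0
  -- Step B: linear independence of the A's
  have hAli : ∀ p q', LinearIndependent ℝ (fun b : Fin (r p q' + 1) => A p q' (b : ℕ)) := by
    intro p q'
    refine li_of_span (hB2 p q') fun b => ?_
    rw [hQ p q' b (Nat.lt_succ_iff.mp b.isLt)]
    refine Submodule.smul_mem _ _ (Submodule.sum_mem _ fun c hc => Submodule.smul_mem _ _ ?_)
    exact Submodule.subset_span ⟨⟨c, Finset.mem_range.mp hc⟩, rfl⟩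
  -- Step C: vanishing of out-of-range A's, and symmetry of r
  have hAzero : ∀ p q' b, r q' p < b → b ≤ r p q' → A p q' b = 0 := by
    intro p q' b h1 h2
    ext v w
    by_cases hv : v.1 = p ∧ w.1 = q'
    · have s1 : ∑ ℓ' ∈ range (r p q' + 1), A p q' ℓ' v w = 1 := hApart p q' v w hv.1 hv.2
      have s2 : ∑ ℓ' ∈ range (r q' p + 1), A p q' ℓ' v w = 1 := by
        rw [← hApart q' p w v hv.2 hv.1]
        refine Finset.sum_congr rfl fun ℓ' hℓ' => ?_
        rw [← hAtrans q' p ℓ' (Nat.lt_succ_iff.mp (Finset.mem_range.mp hℓ'))]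
        rfl
      have hsplit := Finset.sum_Ico_consecutive (fun ℓ' => A p q' ℓ' v w)
        (Nat.zero_le (r q' p + 1)) (by omega : r q' p + 1 ≤ r p q' + 1)
      rw [← Finset.range_eq_Ico] at hsplit
      have key : ∑ ℓ' ∈ Finset.Ico (r q' p + 1) (r p q' + 1), A p q' ℓ' v w = 0 := by
        have : ∑ ℓ' ∈ range (r p q' + 1), A p q' ℓ' v w
            = ∑ ℓ' ∈ range (r q' p + 1), A p q' ℓ' v w
              + ∑ ℓ' ∈ Finset.Ico (r q' p + 1) (r p q' + 1), A p q' ℓ' v w := by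
            simpa only [Finset.range_eq_Ico] using hsplit.symm
        rw [s1, s2] at this; linarith
      have := (Finset.sum_eq_zero_iff_of_nonneg (fun ℓ' _ => by
        rcases hA01 p q' ℓ' v w with h' | h' <;> simp [h'])).mp key b
        (Finset.mem_Ico.mpr ⟨by omega, by omega⟩)
      simpa using this
    · rw [not_and_or] at hv
      simpa using hAsupp p q' b h2 v w hv
  have rsymm : ∀ p q', r p q' = r q' p := by
    intro p q'
    by_contra hne
    rcases Nat.lt_or_ge (r p q') (r q' p) with hlt | hge
    · exact (hAli q' p).ne_zero ⟨r q' p, Nat.lt_succ_self _⟩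
        (hAzero q' p (r q' p) hlt le_rfl)
    · have hlt : r q' p < r p q' := lt_of_le_of_ne hge fun e => hne e.symm
      exact (hAli p q').ne_zero ⟨r p q', Nat.lt_succ_self _⟩
        (hAzero p q' (r p q') hlt le_rfl)
  -- Step D: entry sums and trace of A * Aᵀ
  have sumA : ∀ p q' b, b ≤ r p q' →
      ∑ v : (i : Fin nf) × X i, ∑ w, A p q' b v w = (Fintype.card (X p) : ℝ) * k p q' b := by
    intro p q' b hb
    have rowsum : ∀ v : (i : Fin nf) × X i,
        ∑ w, A p q' b v w = if v.1 = p then k p q' b else 0 := by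
      intro v
      by_cases hv : v.1 = p
      · rw [hk p q' b hb v hv]; simp [hv]
      · simp only [hv, if_false]
        exact Finset.sum_eq_zero fun w _ => hAsupp p q' b hb v w (Or.inl hv)
    calc ∑ v : (i : Fin nf) × X i, ∑ w, A p q' b v w
        = ∑ v : (i : Fin nf) × X i, (if v.1 = p then k p q' b else 0) :=
          Finset.sum_congr rfl (fun v _ => rowsum v)
      _ = ∑ p' : Fin nf, ∑ _x : X p', (if p' = p then k p q' b else 0) := by
          rw [← Finset.univ_sigma_univ, Finset.sum_sigma]
      _ = ∑ p' : Fin nf, (if p' = p then (Fintype.card (X p') : ℝ) * k p q' b else 0) := by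
          refine Finset.sum_congr rfl fun p' _ => ?_
          by_cases hp : p' = p <;>
            simp [hp, Finset.sum_const, Finset.card_univ, nsmul_eq_mul]
      _ = (Fintype.card (X p) : ℝ) * k p q' b := by
          rw [Finset.sum_ite_eq' Finset.univ p
            (fun p' => (Fintype.card (X p') : ℝ) * k p q' b)]
          simp
  have traceAAT : ∀ p q' a b, a ≤ r p q' → b ≤ r p q' →
      (A p q' a * (A p q' b)ᵀ).trace
        = if a = b then (Fintype.card (X p) : ℝ) * k p q' a else 0 := by
    intro p q' a b ha hb
    have htr := trace_mul_transpose_eq (A p q' a) (A p q' b)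
    by_cases hab : a = b
    · subst hab
      rw [htr, if_pos rfl, ← sumA p q' a ha]
      refine Finset.sum_congr rfl fun v _ => Finset.sum_congr rfl fun w _ => ?_
      rcases hA01 p q' a v w with h' | h' <;> simp [h']
    · rw [htr, if_neg hab]
      refine Finset.sum_eq_zero fun v _ => Finset.sum_eq_zero fun w _ => ?_
      by_cases hv : v.1 = p ∧ w.1 = q'
      · rcases hA01 p q' a v w with h' | h'
        · simp [h']
        rcases hA01 p q' b v w with h'' | h''
        · simp [h'']
        exfalso
        have hsub : ({a, b} : Finset ℕ) ⊆ range (r p q' + 1) := by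
          intro x hx
          simp only [Finset.mem_insert, Finset.mem_singleton] at hx
          rcases hx with rfl | rfl <;> simp [Nat.lt_succ_iff, ha, hb]
        have hle := Finset.sum_le_sum_of_subset_of_nonneg
          (f := fun ℓ' => A p q' ℓ' v w) hsub (fun ℓ' _ _ => by
          rcases hA01 p q' ℓ' v w with h0 | h0 <;> simp [h0])
        rw [Finset.sum_pair hab, hApart p q' v w hv.1 hv.2, h', h''] at hle
        linarith
      · rw [not_and_or] at hv
        rw [hAsupp p q' a ha v w hv, zero_mul]
  -- Step E: traces of E-products, multiplicities
  have traceEE : ∀ p q' a b, a ≤ r p q' → b ≤ r q' p →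
      (E p q' a * E q' p b).trace = if a = b then (E p p a).trace else 0 := by
    intro p q' a b ha hb
    rw [hB4 p q' q' p a b ha hb]
    by_cases hab : a = b <;> simp [hab]
  have mEq : ∀ p q' ν, ν ≤ r p q' → (E p p ν).trace = (E q' q' ν).trace := by
    intro p q' ν hν
    have hν' : ν ≤ r q' p := by rw [← rsymm p q']; exact hν
    have e1 : E p q' ν * E q' p ν = E p p ν := by
      rw [hB4 p q' q' p ν ν hν hν']; simp
    have e2 : E q' p ν * E p q' ν = E q' q' ν := by
      rw [hB4 q' p p q' ν ν hν' hν]; simp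
    rw [← e1, Matrix.trace_mul_comm, e2]
  have mPos : ∀ p q' ν, ν ≤ r p q' → 0 < (E p p ν).trace := by
    intro p q' ν hν
    have hν' : ν ≤ r q' p := by rw [← rsymm p q']; exact hν
    have hEne : E p q' ν ≠ 0 := (hB2 p q').ne_zero ⟨ν, Nat.lt_succ_of_le hν⟩
    have e1 : E p q' ν * (E p q' ν)ᵀ = E p p ν := by
      rw [hB3 p q' ν hν, hB4 p q' q' p ν ν hν hν']; simp
    rw [← e1, trace_mul_transpose_eq]
    obtain ⟨v, w, hvw⟩ : ∃ v w, E p q' ν v w ≠ 0 := by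
      by_contra hc; push_neg at hc
      exact hEne (by ext v w; simpa using hc v w)
    have hterm : ∀ v w, (0:ℝ) ≤ E p q' ν v w * E p q' ν v w := fun v w => mul_self_nonneg _
    refine Finset.sum_pos' (fun v _ => Finset.sum_nonneg fun w _ => hterm v w)
      ⟨v, Finset.mem_univ v, ?_⟩
    refine Finset.sum_pos' (fun w _ => hterm v w) ⟨w, Finset.mem_univ w, ?_⟩
    exact mul_self_pos.mpr hvw
  have kposA : ∀ p q' b, b ≤ r p q' → 0 < (Fintype.card (X p) : ℝ) * k p q' b := by
    intro p q' b hb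
    rw [← sumA p q' b hb]
    have hAne : A p q' b ≠ 0 := (hAli p q').ne_zero ⟨b, Nat.lt_succ_of_le hb⟩
    obtain ⟨v, w, hvw⟩ : ∃ v w, A p q' b v w ≠ 0 := by
      by_contra hc; push_neg at hc
      exact hAne (by ext v w; simpa using hc v w)
    have hnn : ∀ v w, (0:ℝ) ≤ A p q' b v w := fun v w => by
      rcases hA01 p q' b v w with h' | h' <;> simp [h']
    refine Finset.sum_pos' (fun v _ => Finset.sum_nonneg fun w _ => hnn v w)
      ⟨v, Finset.mem_univ v, ?_⟩
    refine Finset.sum_pos' (fun w _ => hnn v w) ⟨w, Finset.mem_univ w, ?_⟩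
    exact lt_of_le_of_ne (hnn v w) (Ne.symm hvw)
  have balance : ∀ p q' b, b ≤ r p q' →
      (Fintype.card (X p) : ℝ) * k p q' b = (Fintype.card (X q') : ℝ) * k q' p b := by
    intro p q' b hb
    have hb' : b ≤ r q' p := by rw [← rsymm p q']; exact hb
    rw [← sumA p q' b hb, ← sumA q' p b hb']
    calc ∑ v : (i : Fin nf) × X i, ∑ w, A p q' b v w
        = ∑ w : (i : Fin nf) × X i, ∑ v, A p q' b v w := Finset.sum_comm
      _ = ∑ w : (i : Fin nf) × X i, ∑ v, A q' p b w v := by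
          refine Finset.sum_congr rfl fun w _ => Finset.sum_congr rfl fun v _ => ?_
          rw [← hAtrans p q' b hb]; rfl
  -- Step F: relation between Pm and Qm
  have PQrel : ∀ p q' ℓ0 ν, ℓ0 ≤ r p q' → ν ≤ r p q' →
      Pm p q' ℓ0 ν * (E p p ν).trace
        = (Real.sqrt ((Fintype.card (X p) : ℝ) * (Fintype.card (X q') : ℝ)))⁻¹
            * (Qm p q' ν ℓ0 * ((Fintype.card (X p) : ℝ) * k p q' ℓ0)) := by
    intro p q' ℓ0 ν hℓ0 hν
    have hν' : ν ≤ r q' p := by rw [← rsymm p q']; exact hν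
    have w1 : (A p q' ℓ0 * E q' p ν).trace = Pm p q' ℓ0 ν * (E p p ν).trace := by
      rw [hP p q' ℓ0 hℓ0, Matrix.sum_mul, Matrix.trace_sum]
      have e : ∀ a ∈ range (r p q' + 1), ((Pm p q' ℓ0 a • E p q' a) * E q' p ν).trace
          = if a = ν then Pm p q' ℓ0 a * (E p p a).trace else 0 := by
        intro a ha'
        rw [Matrix.smul_mul, Matrix.trace_smul,
          traceEE p q' a ν (Nat.lt_succ_iff.mp (Finset.mem_range.mp ha')) hν']
        by_cases haν : a = ν <;> simp [haν]
      rw [Finset.sum_congr rfl e, Finset.sum_ite_eq' (range (r p q' + 1)) ν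
        (fun a => Pm p q' ℓ0 a * (E p p a).trace)]
      simp [Nat.lt_succ_iff, hν]
    have w2 : (A p q' ℓ0 * E q' p ν).trace
        = (Real.sqrt ((Fintype.card (X p) : ℝ) * (Fintype.card (X q') : ℝ)))⁻¹
            * (Qm p q' ν ℓ0 * ((Fintype.card (X p) : ℝ) * k p q' ℓ0)) := by
      have hEt : E q' p ν = (E p q' ν)ᵀ := (hB3 p q' ν hν).symm
      rw [hEt, hQ p q' ν hν, Matrix.transpose_smul, Matrix.transpose_sum]
      rw [Finset.sum_congr rfl (fun b _ => Matrix.transpose_smul (Qm p q' ν b) (A p q' b))]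
      rw [Matrix.mul_smul, Matrix.trace_smul, Matrix.mul_sum, Matrix.trace_sum]
      have e : ∀ b ∈ range (r p q' + 1), (A p q' ℓ0 * (Qm p q' ν b • (A p q' b)ᵀ)).trace
          = if ℓ0 = b then Qm p q' ν b * ((Fintype.card (X p) : ℝ) * k p q' ℓ0) else 0 := by
        intro b hb'
        rw [Matrix.mul_smul, Matrix.trace_smul,
          traceAAT p q' ℓ0 b hℓ0 (Nat.lt_succ_iff.mp (Finset.mem_range.mp hb'))]
        by_cases hb0 : ℓ0 = b <;> simp [hb0]
      rw [Finset.sum_congr rfl e, Finset.sum_ite_eq (range (r p q' + 1)) ℓ0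
        (fun b => Qm p q' ν b * ((Fintype.card (X p) : ℝ) * k p q' ℓ0))]
      simp [Nat.lt_succ_iff, hℓ0, smul_eq_mul]
    rw [← w1, w2]
  -- Step I: triple trace
  have T3 : ∀ a b c, a ≤ r i j → b ≤ r j h → c ≤ r h i →
      (E i j a * E j h b * E h i c).trace
        = if a = b ∧ b = c then (E i i a).trace else 0 := by
    intro a b c ha hb hc
    rw [Matrix.trace_mul_comm, ← Matrix.mul_assoc, hB4 h i i j c a hc ha]
    by_cases hca : c = a
    · rw [if_pos ⟨hca, rfl⟩]
      have ha' : c ≤ r i j := hca ▸ ha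
      have e := hB4 h i i j c c hc ha'
      rw [if_pos ⟨rfl, rfl⟩] at e
      rw [← e, Matrix.mul_assoc, hB4 i j j h c b ha' hb]
      by_cases hcb : c = b
      · rw [if_pos ⟨hcb, rfl⟩]
        have hc' : c ≤ r i h := by rw [rsymm i h]; exact hc
        rw [hB4 h i i h c c hc hc', if_pos ⟨rfl, rfl⟩]
        rw [if_pos ⟨hca ▸ hcb, hcb.symm⟩]
        rw [← hca, mEq i h c hc']
      · rw [if_neg (fun hx => hcb hx.1), Matrix.mul_zero, Matrix.trace_zero]
        rw [if_neg (fun hx => hcb (hca.trans hx.1))]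
    · rw [if_neg (fun hx => hca hx.1), Matrix.zero_mul, Matrix.trace_zero]
      rw [if_neg (fun hx => hca (hx.2.symm.trans hx.1.symm))]
  -- Step J/K: the two evaluations of the triple trace
  have hn' : n ≤ r h i := by rw [← rsymm i h]; exact hn
  have Eq1 : (A i j ℓ * A j h m * A h i n).trace
      = pint i j h ℓ m n * ((Fintype.card (X i) : ℝ) * k i h n) := by
    rw [hpint i j h ℓ m hℓ hm, Matrix.sum_mul, Matrix.trace_sum]
    have e : ∀ n' ∈ range (r i h + 1), ((pint i j h ℓ m n' • A i h n') * A h i n).trace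
        = if n' = n then pint i j h ℓ m n' * ((Fintype.card (X i) : ℝ) * k i h n') else 0 := by
      intro n' hn''
      rw [Matrix.smul_mul, Matrix.trace_smul, ← hAtrans i h n hn,
        traceAAT i h n' n (Nat.lt_succ_iff.mp (Finset.mem_range.mp hn'')) hn]
      by_cases hx : n' = n <;> simp [hx]
    rw [Finset.sum_congr rfl e, Finset.sum_ite_eq' (range (r i h + 1)) n
      (fun n' => pint i j h ℓ m n' * ((Fintype.card (X i) : ℝ) * k i h n'))]
    simp [Nat.lt_succ_iff, hn]
  have expand : (A i j ℓ * A j h m * A h i n).trace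
      = ∑ c ∈ range (r h i + 1), ∑ b ∈ range (r j h + 1), ∑ a ∈ range (r i j + 1),
          Pm i j ℓ a * Pm j h m b * Pm h i n c * (E i j a * E j h b * E h i c).trace := by
    rw [hP i j ℓ hℓ, hP j h m hm, hP h i n hn']
    simp only [Matrix.sum_mul, Matrix.mul_sum, Matrix.smul_mul, Matrix.mul_smul,
      Matrix.trace_sum, Matrix.trace_smul, smul_eq_mul, smul_smul, Finset.mul_sum]
    refine Finset.sum_congr rfl fun c _ => ?_
    refine Finset.sum_congr rfl fun b _ => ?_
    refine Finset.sum_congr rfl fun a _ => ?_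
    ring
  have Eq2 : (A i j ℓ * A j h m * A h i n).trace
      = ∑ ν ∈ range (min (min (r i j) (r j h)) (r h i) + 1),
          Pm i j ℓ ν * Pm j h m ν * Pm h i n ν * (E i i ν).trace := by
    rw [expand, sum3_comm]
    rw [Finset.sum_congr rfl (fun a ha' => Finset.sum_congr rfl (fun b hb' =>
      Finset.sum_congr rfl (fun c hc' => by
        rw [T3 a b c (Nat.lt_succ_iff.mp (Finset.mem_range.mp ha'))
          (Nat.lt_succ_iff.mp (Finset.mem_range.mp hb'))
          (Nat.lt_succ_iff.mp (Finset.mem_range.mp hc'))])))]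
    exact collapse3 (r i j) (r j h) (r h i) (Pm i j ℓ) (Pm j h m) (Pm h i n)
      (fun a => (E i i a).trace)
  -- Final assembly
  have hkey : pint i j h ℓ m n * ((Fintype.card (X i) : ℝ) * k i h n)
      = ∑ ν ∈ range (min (min (r i j) (r j h)) (r h i) + 1),
          Pm i j ℓ ν * Pm j h m ν * Pm h i n ν * (E i i ν).trace := Eq1.symm.trans Eq2
  have hkpos : 0 < (Fintype.card (X i) : ℝ) * k i h n := kposA i h n hn
  have hcXi : (0:ℝ) < (Fintype.card (X i) : ℝ) := by exact_mod_cast hXpos i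
  have hcXj : (0:ℝ) < (Fintype.card (X j) : ℝ) := by exact_mod_cast hXpos j
  have hcXh : (0:ℝ) < (Fintype.card (X h) : ℝ) := by exact_mod_cast hXpos h
  have hs : Real.sqrt ((Fintype.card (X i) : ℝ) * (Fintype.card (X j) : ℝ))
      * Real.sqrt ((Fintype.card (X j) : ℝ) * (Fintype.card (X h) : ℝ))
      * Real.sqrt ((Fintype.card (X h) : ℝ) * (Fintype.card (X i) : ℝ))
      = (Fintype.card (X i) : ℝ) * (Fintype.card (X j) : ℝ) * (Fintype.card (X h) : ℝ) := by
    rw [← Real.sqrt_mul (by positivity), ← Real.sqrt_mul (by positivity)]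
    rw [show (Fintype.card (X i) : ℝ) * (Fintype.card (X j) : ℝ)
        * ((Fintype.card (X j) : ℝ) * (Fintype.card (X h) : ℝ))
        * ((Fintype.card (X h) : ℝ) * (Fintype.card (X i) : ℝ))
        = ((Fintype.card (X i) : ℝ) * (Fintype.card (X j) : ℝ) * (Fintype.card (X h) : ℝ))^2
      from by ring]
    exact Real.sqrt_sq (by positivity)
  have hbal := balance i h n hn
  have hterm : ∀ ν ∈ range (min (min (r i j) (r j h)) (r h i) + 1),
      Pm i j ℓ ν * Pm j h m ν * Pm h i n ν * (E i i ν).trace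
      = ((Fintype.card (X i) : ℝ) * k i h n)
          * (k i j ℓ * k j h m / (Fintype.card (X h) : ℝ)
            * ((1 / ((E i i ν).trace) ^ 2) * (Qm i j ν ℓ * Qm j h ν m * Qm h i ν n))) := by
    intro ν hν'
    have hνm := Nat.lt_succ_iff.mp (Finset.mem_range.mp hν')
    have hν1 : ν ≤ r i j := le_trans hνm (le_trans (min_le_left _ _) (min_le_left _ _))
    have hν2 : ν ≤ r j h := le_trans hνm (le_trans (min_le_left _ _) (min_le_right _ _))
    have hν3 : ν ≤ r h i := le_trans hνm (min_le_right _ _)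
    have hν4 : ν ≤ r i h := by rw [rsymm i h]; exact hν3
    have e1 := PQrel i j ℓ ν hℓ hν1
    have e2 := PQrel j h m ν hm hν2
    have e3 := PQrel h i n ν hn' hν3
    rw [← mEq i j ν hν1] at e2
    rw [← mEq i h ν hν4] at e3
    have hmpos : 0 < (E i i ν).trace := mPos i j ν hν1
    have hmne : (E i i ν).trace ≠ 0 := ne_of_gt hmpos
    set s1 := Real.sqrt ((Fintype.card (X i) : ℝ) * (Fintype.card (X j) : ℝ)) with hs1d
    set s2 := Real.sqrt ((Fintype.card (X j) : ℝ) * (Fintype.card (X h) : ℝ)) with hs2d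
    set s3 := Real.sqrt ((Fintype.card (X h) : ℝ) * (Fintype.card (X i) : ℝ)) with hs3d
    have hs1 : (0:ℝ) < s1 := Real.sqrt_pos.mpr (by positivity)
    have hs2 : (0:ℝ) < s2 := Real.sqrt_pos.mpr (by positivity)
    have hs3 : (0:ℝ) < s3 := Real.sqrt_pos.mpr (by positivity)
    have f1 : s1 * (Pm i j ℓ ν * (E i i ν).trace)
        = Qm i j ν ℓ * ((Fintype.card (X i) : ℝ) * k i j ℓ) := by
      rw [e1, ← mul_assoc, mul_inv_cancel₀ (ne_of_gt hs1), one_mul]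
    have f2 : s2 * (Pm j h m ν * (E i i ν).trace)
        = Qm j h ν m * ((Fintype.card (X j) : ℝ) * k j h m) := by
      rw [e2, ← mul_assoc, mul_inv_cancel₀ (ne_of_gt hs2), one_mul]
    have f3 : s3 * (Pm h i n ν * (E i i ν).trace)
        = Qm h i ν n * ((Fintype.card (X h) : ℝ) * k h i n) := by
      rw [e3, ← mul_assoc, mul_inv_cancel₀ (ne_of_gt hs3), one_mul]
    have F : (s1 * (Pm i j ℓ ν * (E i i ν).trace))
        * (s2 * (Pm j h m ν * (E i i ν).trace))
        * (s3 * (Pm h i n ν * (E i i ν).trace))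
        = (Qm i j ν ℓ * ((Fintype.card (X i) : ℝ) * k i j ℓ))
          * (Qm j h ν m * ((Fintype.card (X j) : ℝ) * k j h m))
          * (Qm h i ν n * ((Fintype.card (X h) : ℝ) * k h i n)) := by
      rw [f1, f2, f3]
    have F2 : ((Fintype.card (X i) : ℝ) * (Fintype.card (X j) : ℝ) * (Fintype.card (X h) : ℝ))
        * (Pm i j ℓ ν * Pm j h m ν * Pm h i n ν * ((E i i ν).trace)^3)
        = (Qm i j ν ℓ * ((Fintype.card (X i) : ℝ) * k i j ℓ))
          * (Qm j h ν m * ((Fintype.card (X j) : ℝ) * k j h m))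
          * (Qm h i ν n * ((Fintype.card (X h) : ℝ) * k h i n)) := by
      rw [← hs]
      linear_combination F
    have hG : ((Fintype.card (X i) : ℝ) * (Fintype.card (X j) : ℝ))
        * (Pm i j ℓ ν * Pm j h m ν * Pm h i n ν * (E i i ν).trace)
        = ((Fintype.card (X i) : ℝ) * (Fintype.card (X j) : ℝ))
        * (((Fintype.card (X i) : ℝ) * k i h n)
          * (k i j ℓ * k j h m / (Fintype.card (X h) : ℝ)
            * ((1 / ((E i i ν).trace) ^ 2) * (Qm i j ν ℓ * Qm j h ν m * Qm h i ν n)))) := by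
      field_simp
      have F3 : Pm i j ℓ ν * Pm j h m ν * Pm h i n ν * (E i i ν).trace ^ 3
          * (Fintype.card (X h) : ℝ)
          = Qm i j ν ℓ * Qm j h ν m * Qm h i ν n * (Fintype.card (X i) : ℝ)
            * k i j ℓ * k j h m * k i h n := by
        refine mul_left_cancel₀ (show ((Fintype.card (X i) : ℝ)
          * (Fintype.card (X j) : ℝ)) ≠ 0 by positivity) ?_
        linear_combination F2 - Qm i j ν ℓ * Qm j h ν m * Qm h i ν n * k i j ℓ * k j h m
          * (Fintype.card (X i) : ℝ) * (Fintype.card (X j) : ℝ) * hbal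
      linear_combination F3
    exact mul_left_cancel₀ (by positivity) hG
  calc pint i j h ℓ m n
      = pint i j h ℓ m n * ((Fintype.card (X i) : ℝ) * k i h n)
        / ((Fintype.card (X i) : ℝ) * k i h n) := by
        rw [mul_div_cancel_right₀ _ (ne_of_gt hkpos)]
    _ = (∑ ν ∈ range (min (min (r i j) (r j h)) (r h i) + 1),
          Pm i j ℓ ν * Pm j h m ν * Pm h i n ν * (E i i ν).trace)
        / ((Fintype.card (X i) : ℝ) * k i h n) := by rw [hkey]
    _ = (((Fintype.card (X i) : ℝ) * k i h n)
        * ∑ ν ∈ range (min (min (r i j) (r j h)) (r h i) + 1),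
          (k i j ℓ * k j h m / (Fintype.card (X h) : ℝ)
            * ((1 / ((E i i ν).trace) ^ 2) * (Qm i j ν ℓ * Qm j h ν m * Qm h i ν n))))
        / ((Fintype.card (X i) : ℝ) * k i h n) := by
        rw [Finset.mul_sum, Finset.sum_congr rfl hterm]
    _ = k i j ℓ * k j h m / (Fintype.card (X h) : ℝ) *
        ∑ ν ∈ Finset.range (min (min (r i j) (r j h)) (r h i) + 1),
          (1 / ((E i i ν).trace) ^ 2) * (Qm i j ν ℓ * Qm j h ν m * Qm h i ν n) := by
        rw [← Finset.mul_sum, mul_div_cancel_left₀ _ (ne_of_gt hkpos)]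
end

section
/- Let E_α, E_β be primitive idempotents of a symmetric association scheme on X with Krein numbers q_{α,β}^ℓ, and let Y ⊆ X be a Delsarte t-design with dual inner distribution (b_ℓ). If q_{α,β}^ℓ = 0 for all ℓ > t, then |X| E_α Δ_Y E_β = |Y| δ_{α,β} E_α, where Δ_Y is the diagonal 0-1 matrix of Y. (Key step: ||X| E_α Δ_Y E_β − |Y| δ_{α,β} E_α|² = |Y| Σ_{ℓ=1}^d q_{α,β}^ℓ b_ℓ, where ‖A‖² = tr(A Aᵀ).) -/
open Matrix Finset

/-- If `Y` is a Delsarte `t`-design in a symmetric association scheme and the Krein numbers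
satisfy `q_{α,β}^ℓ = 0` for all `ℓ > t`, then `|X| E_α Δ_Y E_β = |Y| δ_{α,β} E_α`.
Key step: `‖|X| E_α Δ_Y E_β − |Y| δ_{α,β} E_α‖² = |Y| Σ_{ℓ=1}^d q_{α,β}^ℓ b_ℓ`,
where `‖A‖² = tr(A Aᵀ)` and `(b_ℓ)` is the dual inner distribution of `Y`. -/
theorem stmt16 {X : Type} [Fintype X] [DecidableEq X] (d : ℕ)
    (E : Fin (d + 1) → Matrix X X ℝ)
    (hE0 : E 0 = ((Fintype.card X : ℝ))⁻¹ • Matrix.of fun _ _ => (1 : ℝ))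
    (hEsymm : ∀ i, (E i).IsSymm)
    (hEmul : ∀ i j, E i * E j = if i = j then E i else 0)
    (hEsum : ∑ i, E i = 1)
    (q : Fin (d + 1) → Fin (d + 1) → Fin (d + 1) → ℝ)
    (hq : ∀ i j, (E i).hadamard (E j) = ((Fintype.card X : ℝ))⁻¹ • ∑ h, q i j h • E h)
    (Y : Finset X) (hYne : Y.Nonempty) (t : ℕ)
    (χ : X → ℝ) (hχ : χ = fun x => if x ∈ Y then 1 else 0)
    (hdesign : ∀ ℓ : Fin (d + 1), 1 ≤ (ℓ : ℕ) → (ℓ : ℕ) ≤ t → E ℓ *ᵥ χ = 0)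
    (b : Fin (d + 1) → ℝ)
    (hb : ∀ ℓ, b ℓ = ((Fintype.card X : ℝ) / (Y.card : ℝ)) * (χ ⬝ᵥ (E ℓ *ᵥ χ)))
    (α β : Fin (d + 1))
    (hq0 : ∀ ℓ : Fin (d + 1), t < (ℓ : ℕ) → q α β ℓ = 0) :
    let Δ : Matrix X X ℝ := Matrix.diagonal fun x => if x ∈ Y then 1 else 0
    let M : Matrix X X ℝ := (Fintype.card X : ℝ) • (E α * Δ * E β) -
      (if α = β then (Y.card : ℝ) • E α else 0)
    (M * Mᵀ).trace =
      (Y.card : ℝ) * ∑ ℓ ∈ Finset.univ.filter (fun ℓ : Fin (d + 1) => 1 ≤ (ℓ : ℕ)),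
        q α β ℓ * b ℓ ∧
    (Fintype.card X : ℝ) • (E α * Δ * E β) = if α = β then (Y.card : ℝ) • E α else 0 := by
  intro Δ M
  classical
  obtain ⟨y0, hy0⟩ := hYne
  have hXpos : 0 < Fintype.card X := Fintype.card_pos_iff.mpr ⟨y0⟩
  have hn0 : (Fintype.card X : ℝ) ≠ 0 := by positivity
  have hc0 : (Y.card : ℝ) ≠ 0 := by
    have : 0 < Y.card := Finset.card_pos.mpr ⟨y0, hy0⟩
    positivity
  have hM : M = (Fintype.card X : ℝ) • (E α * Δ * E β) -
      (if α = β then (Y.card : ℝ) • E α else 0) := rfl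
  have hΔdef : Δ = Matrix.diagonal χ := by rw [hχ]
  have hΔsymm : Δᵀ = Δ := by rw [hΔdef]; exact Matrix.diagonal_transpose χ
  have hsym : ∀ (i : Fin (d+1)) (x y : X), E i x y = E i y x := by
    intro i x y
    exact congrFun (congrFun (hEsymm i) y) x
  -- entrywise Krein
  have hqent : ∀ (i j : Fin (d+1)) (x y : X),
      E i x y * E j x y = (Fintype.card X : ℝ)⁻¹ * ∑ h, q i j h * E h x y := by
    intro i j x y
    have h1 := congrFun (congrFun (hq i j) x) y
    simpa [Matrix.hadamard, Matrix.smul_apply, Matrix.sum_apply, smul_eq_mul] using h1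
  -- key double-sum identity
  have hQ : ∀ (v w : X → ℝ) (i j : Fin (d+1)),
      (∑ x, ∑ y, v x * E i x y * E j x y * w y)
        = (Fintype.card X : ℝ)⁻¹ * ∑ h, q i j h * (v ⬝ᵥ (E h *ᵥ w)) := by
    intro v w i j
    have step : ∀ x y, v x * E i x y * E j x y * w y
        = ∑ h, (Fintype.card X : ℝ)⁻¹ * (q i j h * (v x * E h x y * w y)) := by
      intro x y
      calc v x * E i x y * E j x y * w y
          = (E i x y * E j x y) * (v x * w y) := by ring
        _ = ((Fintype.card X : ℝ)⁻¹ * ∑ h, q i j h * E h x y) * (v x * w y) := by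
            rw [hqent i j x y]
        _ = ∑ h, (Fintype.card X : ℝ)⁻¹ * (q i j h * (v x * E h x y * w y)) := by
            rw [Finset.mul_sum, Finset.sum_mul]
            refine Finset.sum_congr rfl fun h _ => ?_
            ring
    calc (∑ x, ∑ y, v x * E i x y * E j x y * w y)
        = ∑ x, ∑ y, ∑ h, (Fintype.card X : ℝ)⁻¹ * (q i j h * (v x * E h x y * w y)) :=
          Finset.sum_congr rfl fun x _ => Finset.sum_congr rfl fun y _ => step x y
      _ = ∑ x, ∑ h, ∑ y, (Fintype.card X : ℝ)⁻¹ * (q i j h * (v x * E h x y * w y)) :=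
          Finset.sum_congr rfl fun x _ => Finset.sum_comm
      _ = ∑ h, ∑ x, ∑ y, (Fintype.card X : ℝ)⁻¹ * (q i j h * (v x * E h x y * w y)) :=
          Finset.sum_comm
      _ = (Fintype.card X : ℝ)⁻¹ * ∑ h, q i j h * (v ⬝ᵥ (E h *ᵥ w)) := by
          simp only [dotProduct, Matrix.mulVec, Finset.mul_sum]
          refine Finset.sum_congr rfl fun h _ => Finset.sum_congr rfl fun x _ =>
            Finset.sum_congr rfl fun y _ => by ring
  -- vector of ones
  set u : X → ℝ := fun _ => 1 with hu
  have huE : ∀ h : Fin (d+1), E h *ᵥ u = if h = 0 then u else 0 := by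
    intro h
    have h0 : E 0 *ᵥ u = u := by
      rw [hE0]
      ext x
      simp [Matrix.mulVec, dotProduct, hu, Matrix.smul_apply]
      field_simp
    by_cases hh : h = 0
    · subst hh; simp [h0]
    · rw [if_neg hh, ← h0, Matrix.mulVec_mulVec, hEmul, if_neg hh, Matrix.zero_mulVec]
  have huu : u ⬝ᵥ u = (Fintype.card X : ℝ) := by simp [dotProduct, hu]
  have hχu : χ ⬝ᵥ u = (Y.card : ℝ) := by simp [dotProduct, hu, hχ]
  have huEu : ∀ h : Fin (d+1), u ⬝ᵥ (E h *ᵥ u)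
      = if h = 0 then (Fintype.card X : ℝ) else 0 := by
    intro h
    rw [huE h]
    split <;> simp [huu]
  have hχEu : ∀ h : Fin (d+1), χ ⬝ᵥ (E h *ᵥ u)
      = if h = 0 then (Y.card : ℝ) else 0 := by
    intro h
    rw [huE h]
    split <;> simp [hχu]
  have hχEχ : ∀ h : Fin (d+1), χ ⬝ᵥ (E h *ᵥ χ)
      = ((Y.card : ℝ) / (Fintype.card X : ℝ)) * b h := by
    intro h
    rw [hb h]
    field_simp
  -- trace identities as double sums
  have htrace_pair : ∀ i j : Fin (d+1), ((E i * Δ) * (E j * Δ)).trace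
      = ∑ x, ∑ y, χ x * E i x y * E j x y * χ y := by
    intro i j
    rw [hΔdef]
    simp only [Matrix.trace, Matrix.diag_apply, Matrix.mul_apply, Matrix.diagonal_apply,
      mul_ite, mul_zero, ite_mul, zero_mul, Finset.sum_ite_eq', Finset.mem_univ, if_pos]
    refine Finset.sum_congr rfl fun x _ => Finset.sum_congr rfl fun y _ => ?_
    rw [hsym j y x]
    ring
  have htrace_mul : ∀ i j : Fin (d+1), (E i * E j).trace
      = ∑ x, ∑ y, u x * E i x y * E j x y * u y := by
    intro i j
    simp only [Matrix.trace, Matrix.diag_apply, Matrix.mul_apply, hu]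
    refine Finset.sum_congr rfl fun x _ => Finset.sum_congr rfl fun y _ => ?_
    rw [hsym j y x]
    ring
  have htrace_Etrace : ∀ i j : Fin (d+1), (E i * E j).trace
      = if i = j then (E i).trace else 0 := by
    intro i j
    rw [hEmul i j]
    split <;> simp
  have htrace_diag : (E α * Δ).trace = ∑ x, ∑ y, χ x * E α x y * E α x y * u y := by
    have h1 : ∀ x, (∑ y, χ x * E α x y * E α x y * u y) = χ x * (E α * E α) x x := by
      intro x
      rw [Matrix.mul_apply, Finset.mul_sum]
      refine Finset.sum_congr rfl fun y _ => ?_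
      rw [hsym α y x, hu]
      ring
    rw [Finset.sum_congr rfl fun x _ => h1 x, hEmul α α, if_pos rfl, hΔdef]
    simp only [Matrix.trace, Matrix.diag_apply, Matrix.mul_diagonal]
    exact (Finset.sum_congr rfl fun x _ => by ring).symm
  -- q _ _ 0 = trace of product
  have hq00 : ∀ i j : Fin (d+1), q i j 0 = if i = j then (E i).trace else 0 := by
    intro i j
    have h1 := hQ u u i j
    rw [← htrace_mul i j, htrace_Etrace i j] at h1
    have h2 : (∑ h, q i j h * (u ⬝ᵥ (E h *ᵥ u))) = q i j 0 * (Fintype.card X : ℝ) := by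
      rw [Finset.sum_eq_single 0]
      · rw [huEu 0, if_pos rfl]
      · intro h _ hh
        rw [huEu h, if_neg hh, mul_zero]
      · intro habs; exact absurd (Finset.mem_univ 0) habs
    rw [h2] at h1
    field_simp at h1
    rw [← h1]
    by_cases hij : i = j <;> simp [hij]
  -- trace of EαΔ
  have htrEΔ : (E α * Δ).trace = (Y.card : ℝ) * (E α).trace / (Fintype.card X : ℝ) := by
    have h1 := hQ χ u α α
    rw [← htrace_diag] at h1
    have h2 : (∑ h, q α α h * (χ ⬝ᵥ (E h *ᵥ u))) = q α α 0 * (Y.card : ℝ) := by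
      rw [Finset.sum_eq_single 0]
      · rw [hχEu 0, if_pos rfl]
      · intro h _ hh
        rw [hχEu h, if_neg hh, mul_zero]
      · intro habs; exact absurd (Finset.mem_univ 0) habs
    rw [h2, hq00 α α, if_pos rfl] at h1
    rw [h1]
    field_simp
  have hsumχ : (∑ x, χ x) = (Y.card : ℝ) := by simp [hχ]
  -- b 0 = |Y|
  have hb0 : b 0 = (Y.card : ℝ) := by
    have hE0χv : E 0 *ᵥ χ = ((Fintype.card X : ℝ)⁻¹ * (Y.card : ℝ)) • u := by
      rw [hE0]
      ext x
      simp only [Matrix.mulVec, dotProduct, Matrix.smul_apply, Matrix.of_apply,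
        smul_eq_mul, Pi.smul_apply, hu, mul_one]
      rw [← Finset.mul_sum, hsumχ]
    rw [hb 0, hE0χv, dotProduct_smul, smul_eq_mul, hχu]
    field_simp
  -- sum splitting over nonzero indices
  have hfilter : Finset.univ.filter (fun ℓ : Fin (d+1) => 1 ≤ (ℓ:ℕ)) = Finset.univ.erase 0 := by
    ext ℓ
    simp only [Finset.mem_filter, Finset.mem_univ, true_and, Finset.mem_erase, and_true]
    rw [Nat.one_le_iff_ne_zero, ne_eq, ne_eq, Fin.ext_iff, Fin.val_zero]
  have hsplit : (∑ h, q α β h * b h)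
      = q α β 0 * b 0 + ∑ ℓ ∈ Finset.univ.filter (fun ℓ : Fin (d+1) => 1 ≤ (ℓ:ℕ)),
        q α β ℓ * b ℓ := by
    rw [hfilter]
    exact (Finset.add_sum_erase Finset.univ (fun ℓ => q α β ℓ * b ℓ)
      (Finset.mem_univ 0)).symm
  -- transposes
  have hATgen : ∀ i j : Fin (d+1), (E i * Δ * E j)ᵀ = E j * Δ * E i := by
    intro i j
    rw [Matrix.transpose_mul, Matrix.transpose_mul, hΔsymm, hEsymm i, hEsymm j,
      Matrix.mul_assoc]
  have hTrAA : ∀ i j : Fin (d+1), ((E i * Δ * E j) * (E i * Δ * E j)ᵀ).trace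
      = ((E i * Δ) * (E j * Δ)).trace := by
    intro i j
    rw [hATgen i j]
    have h3 : (E i * Δ * E j) * (E j * Δ * E i) = ((E i * Δ) * (E j * Δ)) * E i := by
      simp only [Matrix.mul_assoc]
      rw [← Matrix.mul_assoc (E j) (E j), hEmul j j, if_pos rfl]
    rw [h3, Matrix.trace_mul_comm, ← Matrix.mul_assoc (E i) (E i * Δ) (E j * Δ),
      ← Matrix.mul_assoc (E i) (E i) Δ, hEmul i i, if_pos rfl]
  have hS : ((E α * Δ) * (E β * Δ)).trace
      = (Fintype.card X : ℝ)⁻¹ * (((Y.card : ℝ) / (Fintype.card X : ℝ))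
          * (∑ h, q α β h * b h)) := by
    rw [htrace_pair α β, hQ χ χ α β]
    simp only [hχEχ]
    rw [Finset.mul_sum, Finset.mul_sum, Finset.mul_sum]
    refine Finset.sum_congr rfl fun h _ => by ring
  -- main key identity
  suffices key : (M * Mᵀ).trace =
      (Y.card : ℝ) * ∑ ℓ ∈ Finset.univ.filter (fun ℓ : Fin (d + 1) => 1 ≤ (ℓ : ℕ)),
        q α β ℓ * b ℓ by
    refine ⟨key, ?_⟩
    have hzero : (M * Mᵀ).trace = 0 := by
      rw [key, Finset.sum_eq_zero, mul_zero]
      intro ℓ hℓ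
      rw [Finset.mem_filter] at hℓ
      by_cases hle : (ℓ:ℕ) ≤ t
      · rw [hb ℓ, hdesign ℓ hℓ.2 hle]
        simp
      · rw [hq0 ℓ (lt_of_not_ge hle), zero_mul]
    have hsq : ∑ x, ∑ y, M x y * M x y = 0 := by
      rw [← hzero]
      simp [Matrix.trace, Matrix.diag_apply, Matrix.mul_apply, Matrix.transpose_apply]
    have hMzero : M = 0 := by
      ext x y
      have h1 := (Finset.sum_eq_zero_iff_of_nonneg
        (fun x _ => Finset.sum_nonneg fun y _ => mul_self_nonneg (M x y))).mp hsq x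
        (Finset.mem_univ x)
      have h2 := (Finset.sum_eq_zero_iff_of_nonneg
        (fun y _ => mul_self_nonneg (M x y))).mp h1 y (Finset.mem_univ y)
      simpa using mul_self_eq_zero.mp h2
    exact sub_eq_zero.mp (hM.symm.trans hMzero)
  by_cases hab : α = β
  · subst hab
    have hMval : M = (Fintype.card X : ℝ) • (E α * Δ * E α) - (Y.card : ℝ) • E α := by
      rw [hM, if_pos rfl]
    have hMT : Mᵀ = (Fintype.card X : ℝ) • (E α * Δ * E α) - (Y.card : ℝ) • E α := by
      rw [hMval, Matrix.transpose_sub, Matrix.transpose_smul, Matrix.transpose_smul,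
        hATgen α α, hEsymm α]
    have hAA : ((E α * Δ * E α) * (E α * Δ * E α)).trace
        = ((E α * Δ) * (E α * Δ)).trace := by
      have h4 := hTrAA α α
      rwa [hATgen α α] at h4
    have hABtr : ((E α * Δ * E α) * E α).trace = (E α * Δ).trace := by
      rw [Matrix.mul_assoc (E α * Δ), hEmul α α, if_pos rfl, Matrix.trace_mul_comm,
        ← Matrix.mul_assoc, hEmul α α, if_pos rfl]
    have hBAtr : (E α * (E α * Δ * E α)).trace = (E α * Δ).trace := by
      rw [Matrix.trace_mul_comm]
      exact hABtr
    rw [hMval, Matrix.transpose_sub, Matrix.transpose_smul, Matrix.transpose_smul,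
      hATgen α α, hEsymm α, Matrix.sub_mul, Matrix.mul_sub, Matrix.mul_sub,
      Matrix.trace_sub, Matrix.trace_sub, Matrix.trace_sub]
    simp only [smul_mul_assoc, mul_smul_comm, Matrix.trace_smul, smul_eq_mul, smul_smul]
    rw [hAA, hABtr, hBAtr, hS, htrace_Etrace α α, if_pos rfl, htrEΔ, hsplit,
      hq00 α α, if_pos rfl, hb0]
    field_simp
    ring
  · have hMval : M = (Fintype.card X : ℝ) • (E α * Δ * E β) := by
      rw [hM, if_neg hab, sub_zero]
    rw [hMval, Matrix.transpose_smul]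
    simp only [smul_mul_assoc, mul_smul_comm, Matrix.trace_smul, smul_eq_mul, smul_smul]
    rw [hTrAA α β, hS, hsplit, hq00 α β, if_neg hab, zero_mul, zero_add]
    field_simp
end
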